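/- arXiv:0903.1594 — 10 statements merged into one kernel-verified Lean document; each statement's English description precedes it below -/
import Mathlib

section
/- Let L : ℝⁿ × ℝⁿ × Ω → ℝ be continuous, stationary, strictly convex and superlinear in v, and let x : [0,∞) → ℝⁿ be a globally Lipschitz curve with x(0) = 0. Fix ω₀ ∈ Ω. Any weak-* sublimit μ (along T_j → ∞) of the occupation measures μ_T defined by ∫ φ dμ_T = (1/T) ∫₀^T φ(ẋ(t), τ_{x(t)} ω₀) dt on ℝⁿ × Ω is a probability measure satisfying the holonomy condition ∫ v · D_x φ(0, ω) dμ(v, ω) = 0 for every stationary φ ∈ C¹_s(ℝⁿ × Ω) that is bounded. -/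
open Filter MeasureTheory
open scoped RealInnerProductSpace

/-- FTC-type bound for Lipschitz functions with a.e. derivative. -/
lemma lip_integral_deriv_bound {ψ g : ℝ → ℝ} {Lc : NNReal}
    (hψ : LipschitzWith Lc ψ) {B : ℝ} (hB : ∀ t, |ψ t| ≤ B)
    (hg : ∀ᵐ t ∂(volume : Measure ℝ), HasDerivAt ψ (g t) t)
    {T : ℝ} (hT : 0 ≤ T) :
    |∫ t in Set.Ioc (0 : ℝ) T, g t| ≤ 2 * B := by
  have hψc : Continuous ψ := hψ.continuous
  set q : ℕ → ℝ → ℝ := fun m t => ((m : ℝ) + 1) * (ψ (t + ((m : ℝ) + 1)⁻¹) - ψ t) with hq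
  have hm_pos : ∀ m : ℕ, (0 : ℝ) < ((m : ℝ) + 1)⁻¹ := fun m => by positivity
  have hqc : ∀ m, Continuous (q m) := fun m => by
    exact continuous_const.mul ((hψc.comp (continuous_id.add continuous_const)).sub hψc)
  -- a.e. convergence of difference quotients
  have h_lim : ∀ᵐ t ∂(volume : Measure ℝ),
      Tendsto (fun m => q m t) atTop (nhds (g t)) := by
    filter_upwards [hg] with t ht
    have hslope := hasDerivAt_iff_tendsto_slope_zero.1 ht
    have hseq : Tendsto (fun m : ℕ => ((m : ℝ) + 1)⁻¹) atTop (nhdsWithin 0 {(0:ℝ)}ᶜ) := by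
      apply tendsto_nhdsWithin_of_tendsto_nhds_of_eventually_within
      · exact tendsto_one_div_add_atTop_nhds_zero_nat.congr (by
          intro m; simp [one_div])
      · exact Eventually.of_forall fun m => (ne_of_gt (hm_pos m))
    have := hslope.comp hseq
    refine this.congr fun m => ?_
    simp only [Function.comp_apply, smul_eq_mul, hq]
    rw [inv_inv]
  -- domination
  have h_bound : ∀ m, ∀ᵐ t ∂((volume : Measure ℝ).restrict (Set.Ioc (0:ℝ) T)),
      ‖q m t‖ ≤ (Lc : ℝ) := by
    intro m
    refine Eventually.of_forall fun t => ?_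
    have h1 : |ψ (t + ((m : ℝ) + 1)⁻¹) - ψ t| ≤ (Lc : ℝ) * ((m : ℝ) + 1)⁻¹ := by
      have := hψ.dist_le_mul (t + ((m : ℝ) + 1)⁻¹) t
      simpa [Real.dist_eq, abs_of_pos (hm_pos m), abs_of_pos (show (0:ℝ) < (m:ℝ)+1 by positivity)] using this
    have hne : ((m : ℝ) + 1) ≠ 0 := by positivity
    calc ‖q m t‖ = ((m : ℝ) + 1) * |ψ (t + ((m : ℝ) + 1)⁻¹) - ψ t| := by
          rw [hq]; simp [abs_mul, abs_of_pos (show (0:ℝ) < (m:ℝ)+1 by positivity)]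
      _ ≤ ((m : ℝ) + 1) * ((Lc : ℝ) * ((m : ℝ) + 1)⁻¹) := by
          apply mul_le_mul_of_nonneg_left h1 (by positivity)
      _ = (Lc : ℝ) := by field_simp
  -- dominated convergence
  have hDCT : Tendsto (fun m => ∫ t in Set.Ioc (0:ℝ) T, q m t) atTop
      (nhds (∫ t in Set.Ioc (0:ℝ) T, g t)) := by
    refine MeasureTheory.tendsto_integral_of_dominated_convergence
      (fun _ => (Lc : ℝ)) (fun m => (hqc m).aestronglyMeasurable) ?_ h_bound ?_
    · simpa using integrableOn_const.2 (Or.inr (by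
        simp [Real.volume_Ioc]; exact ENNReal.ofReal_lt_top))
    · exact ae_restrict_of_ae h_lim
  -- bound on each quotient integral
  have hBnn : 0 ≤ B := le_trans (abs_nonneg _) (hB 0)
  have hIm : ∀ m, |∫ t in Set.Ioc (0:ℝ) T, q m t| ≤ 2 * B := by
    intro m
    set h : ℝ := ((m : ℝ) + 1)⁻¹ with hh
    have hInt : ∀ a b : ℝ, IntervalIntegrable ψ volume a b :=
      fun a b => hψc.intervalIntegrable a b
    have key : (∫ t in Set.Ioc (0:ℝ) T, q m t)
        = ((m : ℝ) + 1) * ((∫ t in T..(T + h), ψ t) - ∫ t in (0:ℝ)..h, ψ t) := by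
      rw [← intervalIntegral.integral_of_le hT]
      have hInt2 : IntervalIntegrable (fun t => ψ (t + h)) volume 0 T :=
        Continuous.intervalIntegrable (by fun_prop) _ _
      have e1 : (∫ t in (0:ℝ)..T, q m t)
          = ((m : ℝ) + 1) * ((∫ t in (0:ℝ)..T, ψ (t + h)) - ∫ t in (0:ℝ)..T, ψ t) := by
        rw [← intervalIntegral.integral_sub hInt2 (hInt _ _), ← intervalIntegral.integral_const_mul]
      rw [e1, intervalIntegral.integral_comp_add_right ψ h]
      congr 1
      have a1 : (∫ t in (0+h)..(T+h), ψ t)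
          = (∫ t in (0+h)..T, ψ t) + ∫ t in T..(T+h), ψ t :=
        (intervalIntegral.integral_add_adjacent_intervals (hInt _ _) (hInt _ _)).symm
      have a2 : (∫ t in (0:ℝ)..T, ψ t)
          = (∫ t in (0:ℝ)..h, ψ t) + ∫ t in h..T, ψ t :=
        (intervalIntegral.integral_add_adjacent_intervals (hInt _ _) (hInt _ _)).symm
      rw [a1, a2]
      simp only [zero_add]
      ring
    rw [key]
    have hb1 : ‖∫ t in T..(T + h), ψ t‖ ≤ B * |T + h - T| :=
      intervalIntegral.norm_integral_le_of_norm_le_const fun t _ => by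
        simpa using hB t
    have hb2 : ‖∫ t in (0:ℝ)..h, ψ t‖ ≤ B * |h - 0| :=
      intervalIntegral.norm_integral_le_of_norm_le_const fun t _ => by
        simpa using hB t
    have hhabs : |T + h - T| = h := by
      simp [abs_of_pos (hm_pos m)]; exact (hm_pos m).le
    have hhabs2 : |h - 0| = h := by simp [abs_of_pos (hm_pos m)]; exact (hm_pos m).le
    rw [hhabs] at hb1; rw [hhabs2] at hb2
    have : |(∫ t in T..(T + h), ψ t) - ∫ t in (0:ℝ)..h, ψ t| ≤ 2 * (B * h) := by
      calc |(∫ t in T..(T + h), ψ t) - ∫ t in (0:ℝ)..h, ψ t|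
          ≤ ‖∫ t in T..(T + h), ψ t‖ + ‖∫ t in (0:ℝ)..h, ψ t‖ := abs_sub _ _
        _ ≤ B * h + B * h := add_le_add hb1 hb2
        _ = 2 * (B * h) := by ring
    calc |((m : ℝ) + 1) * ((∫ t in T..(T + h), ψ t) - ∫ t in (0:ℝ)..h, ψ t)|
        = ((m : ℝ) + 1) * |(∫ t in T..(T + h), ψ t) - ∫ t in (0:ℝ)..h, ψ t| := by
          rw [abs_mul, abs_of_pos (show (0:ℝ) < (m:ℝ)+1 by positivity)]
      _ ≤ ((m : ℝ) + 1) * (2 * (B * h)) :=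
          mul_le_mul_of_nonneg_left this (by positivity)
      _ = 2 * B := by rw [hh]; field_simp
  -- conclude
  have habs : Tendsto (fun m => |∫ t in Set.Ioc (0:ℝ) T, q m t|) atTop
      (nhds |∫ t in Set.Ioc (0:ℝ) T, g t|) := hDCT.abs
  exact le_of_tendsto habs (Eventually.of_forall hIm)

/-- Any weak-* sublimit of the occupation measures of a globally Lipschitz
trajectory is a probability measure satisfying the holonomy condition
holonomy for all bounded stationary `φ ∈ C¹_s(ℝⁿ × Ω)`. -/
theorem stmt_5 {n : ℕ} {Ω : Type*} [MetricSpace Ω] [CompactSpace Ω]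
    [MeasurableSpace Ω] [BorelSpace Ω]
    (L : EuclideanSpace ℝ (Fin n) → EuclideanSpace ℝ (Fin n) → Ω → ℝ)
    (hLcont : Continuous fun q : EuclideanSpace ℝ (Fin n) ×
      EuclideanSpace ℝ (Fin n) × Ω => L q.1 q.2.1 q.2.2)
    (τ : EuclideanSpace ℝ (Fin n) → Ω → Ω)
    (hτcont : Continuous fun q : EuclideanSpace ℝ (Fin n) × Ω => τ q.1 q.2)
    (hadd : ∀ x y ω, τ (x + y) ω = τ x (τ y ω)) (hzero : ∀ ω, τ 0 ω = ω)
    (hLstat : ∀ x y v ω, L (x + y) v ω = L x v (τ y ω))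
    (hLconv : ∀ x ω, StrictConvexOn ℝ Set.univ fun v => L x v ω)
    (hLsuper : ∀ (x : EuclideanSpace ℝ (Fin n)) (ω : Ω) (c : ℝ), ∃ b : ℝ,
      ∀ v, c * ‖v‖ - b ≤ L x v ω)
    (K : NNReal) (x : ℝ → EuclideanSpace ℝ (Fin n)) (hx : LipschitzWith K x)
    (hx0 : x 0 = 0)
    (x' : ℝ → EuclideanSpace ℝ (Fin n))
    (hx' : ∀ᵐ t ∂(volume : Measure ℝ), HasDerivAt x (x' t) t)
    (ω₀ : Ω) (T : ℕ → ℝ) (hT : Tendsto T atTop atTop)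
    (μ : Measure (EuclideanSpace ℝ (Fin n) × Ω)) [IsProbabilityMeasure μ]
    (hconv : ∀ f : BoundedContinuousFunction (EuclideanSpace ℝ (Fin n) × Ω) ℝ,
      Tendsto (fun j => (T j)⁻¹ * ∫ t in Set.Ioc (0 : ℝ) (T j), f (x' t, τ (x t) ω₀))
        atTop (nhds (∫ q, f q ∂μ))) :
    ∀ (φ : EuclideanSpace ℝ (Fin n) → Ω → ℝ) (Dφ : Ω → EuclideanSpace ℝ (Fin n)),
      (∀ a y ω, φ (a + y) ω = φ a (τ y ω)) →
      (∀ ω, Continuous fun a => φ a ω) →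
      (∀ a, Continuous (φ a)) →
      Continuous Dφ →
      (∀ ω, HasGradientAt (fun a => φ a ω) (Dφ ω) 0) →
      (∃ B, ∀ a ω, |φ a ω| ≤ B) →
      ∫ q, (⟪q.1, Dφ q.2⟫) ∂μ = 0 := by
  intro φ Dφ hstat hφx hφω hDφc hgrad hbdd
  obtain ⟨B, hB⟩ := hbdd
  have hBnn : (0:ℝ) ≤ B := le_trans (abs_nonneg _) (hB 0 ω₀)
  -- bound on the gradient field
  obtain ⟨C₀, hC₀⟩ := isCompact_univ.exists_bound_of_continuousOn
    (hDφc.continuousOn (s := Set.univ))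
  set C : ℝ := max C₀ 0 with hCdef
  have hCnn : (0:ℝ) ≤ C := le_max_right _ _
  have hC : ∀ ω, ‖Dφ ω‖ ≤ C := fun ω =>
    le_trans (hC₀ ω (Set.mem_univ ω)) (le_max_left _ _)
  -- gradient of φ(·, ω₀) at every point
  have hgradAll : ∀ y : EuclideanSpace ℝ (Fin n),
      HasFDerivAt (fun a => φ a ω₀)
        (InnerProductSpace.toDual ℝ _ (Dφ (τ y ω₀))) y := by
    intro y
    have h0 := (hgrad (τ y ω₀)).hasFDerivAt
    have heq : (fun a => φ a ω₀) = (fun b => φ b (τ y ω₀)) ∘ (fun a => a - y) := by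
      funext a
      simp only [Function.comp_apply]
      rw [← hstat (a - y) y ω₀, sub_add_cancel]
    have hsub : HasFDerivAt (fun a : EuclideanSpace ℝ (Fin n) => a - y)
        (ContinuousLinearMap.id ℝ _) y := by
      simpa using (hasFDerivAt_id y).sub_const y
    have h0' : HasFDerivAt (fun b => φ b (τ y ω₀))
        (InnerProductSpace.toDual ℝ _ (Dφ (τ y ω₀))) (y - y) := by
      rw [sub_self]; exact h0
    have := HasFDerivAt.comp (g := fun b => φ b (τ y ω₀))
      (f := fun a => a - y) y h0' hsub
    rw [heq]
    simpa using this
  -- φ(·, ω₀) is Lipschitz with constant C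
  have hφlip : LipschitzWith C.toNNReal (fun a => φ a ω₀) := by
    rw [← lipschitzOnWith_univ]
    refine convex_univ.lipschitzOnWith_of_nnnorm_hasFDerivWithin_le
      (fun y _ => (hgradAll y).hasFDerivWithinAt) ?_
    intro y _
    rw [← NNReal.coe_le_coe, coe_nnnorm, Real.coe_toNNReal _ hCnn,
      LinearIsometryEquiv.norm_map]
    exact hC _
  set ψ : ℝ → ℝ := fun t => φ (x t) ω₀ with hψdef
  have hψlip : LipschitzWith (C.toNNReal * K) ψ := hφlip.comp hx
  have hψB : ∀ t, |ψ t| ≤ B := fun t => hB _ _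
  set g : ℝ → ℝ := fun t => ⟪x' t, Dφ (τ (x t) ω₀)⟫ with hgdef
  -- a.e. chain rule
  have hgd : ∀ᵐ t ∂(volume : Measure ℝ), HasDerivAt ψ (g t) t := by
    filter_upwards [hx'] with t ht
    have h1 := (hgradAll (x t)).comp_hasDerivAt t ht
    have heq2 : (InnerProductSpace.toDual ℝ (EuclideanSpace ℝ (Fin n)) (Dφ (τ (x t) ω₀)))
        (x' t) = ⟪x' t, Dφ (τ (x t) ω₀)⟫ := by
      rw [InnerProductSpace.toDual_apply_apply, real_inner_comm]
    rw [heq2] at h1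
    exact h1
  -- a.e. speed bound
  have hspeed : ∀ᵐ t ∂(volume : Measure ℝ), ‖x' t‖ ≤ (K : ℝ) := by
    filter_upwards [hx'] with t ht
    exact ht.le_of_lipschitz hx
  -- Step 1 : μ-a.e. ‖v‖ ≤ K, via a bump test function
  set u₀ : EuclideanSpace ℝ (Fin n) × Ω → ℝ :=
    fun q => max 0 (min 1 (‖q.1‖ - (K:ℝ))) with hu₀
  have hu₀c : Continuous u₀ :=
    continuous_const.max (continuous_const.min
      ((continuous_norm.comp continuous_fst).sub continuous_const))
  have hu₀b : ∀ q, ‖u₀ q‖ ≤ 1 := by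
    intro q
    rw [Real.norm_eq_abs, abs_of_nonneg (le_max_left _ _)]
    exact max_le zero_le_one (min_le_left _ _)
  set U : BoundedContinuousFunction (EuclideanSpace ℝ (Fin n) × Ω) ℝ :=
    BoundedContinuousFunction.ofNormedAddCommGroup u₀ hu₀c 1 hu₀b with hUdef
  have hUcoe : ∀ q, U q = u₀ q := fun q => rfl
  have hU0 : ∀ j, (T j)⁻¹ * ∫ t in Set.Ioc (0:ℝ) (T j), U (x' t, τ (x t) ω₀) = 0 := by
    intro j
    have : ∫ t in Set.Ioc (0:ℝ) (T j), U (x' t, τ (x t) ω₀) = 0 := by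
      apply MeasureTheory.integral_eq_zero_of_ae
      apply ae_restrict_of_ae
      filter_upwards [hspeed] with t ht
      rw [hUcoe]
      have h1 : min 1 (‖x' t‖ - (K:ℝ)) ≤ 0 :=
        le_trans (min_le_right _ _) (by linarith)
      simpa [hu₀] using max_eq_left h1
    rw [this, mul_zero]
  have hUint : ∫ q, U q ∂μ = 0 := by
    have h1 := hconv U
    rw [show (fun j => (T j)⁻¹ * ∫ t in Set.Ioc (0:ℝ) (T j), U (x' t, τ (x t) ω₀))
        = fun _ => (0:ℝ) from funext hU0] at h1
    exact tendsto_nhds_unique h1 tendsto_const_nhds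
  have hae : ∀ᵐ q ∂μ, ‖q.1‖ ≤ (K:ℝ) := by
    have hnn : 0 ≤ fun q => U q := fun q => le_max_left _ _
    have h2 := (MeasureTheory.integral_eq_zero_iff_of_nonneg hnn (U.integrable μ)).1 hUint
    filter_upwards [h2] with q hq
    by_contra hlt
    push_neg at hlt
    have h1 : 0 < min 1 (‖q.1‖ - (K:ℝ)) := lt_min one_pos (by linarith)
    have h3 : 0 < U q := lt_of_lt_of_le h1 (le_max_right _ _)
    rw [hq] at h3
    exact lt_irrefl _ h3
  -- the cutoff test function
  set χ : EuclideanSpace ℝ (Fin n) → ℝ :=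
    fun v => max 0 (min 1 ((K:ℝ) + 1 - ‖v‖)) with hχ
  set f₀ : EuclideanSpace ℝ (Fin n) × Ω → ℝ :=
    fun q => χ q.1 * ⟪q.1, Dφ q.2⟫ with hf₀
  have hχc : Continuous χ :=
    continuous_const.max (continuous_const.min (continuous_const.sub continuous_norm))
  have hχnn : ∀ v, 0 ≤ χ v := fun v => le_max_left _ _
  have hχle : ∀ v, χ v ≤ 1 := fun v => max_le zero_le_one (min_le_left _ _)
  have hχone : ∀ v : EuclideanSpace ℝ (Fin n), ‖v‖ ≤ (K:ℝ) → χ v = 1 := by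
    intro v hv
    have h1 : (1:ℝ) ≤ (K:ℝ) + 1 - ‖v‖ := by linarith
    rw [hχ]
    simp only
    rw [min_eq_left h1, max_eq_right zero_le_one]
  have hf₀c : Continuous f₀ := by
    apply Continuous.mul (hχc.comp continuous_fst)
    exact continuous_fst.inner (hDφc.comp continuous_snd)
  have hf₀b : ∀ q, ‖f₀ q‖ ≤ ((K:ℝ) + 1) * C := by
    intro q
    rcases le_or_gt ‖q.1‖ ((K:ℝ) + 1) with h | h
    · rw [hf₀]
      simp only [Real.norm_eq_abs, abs_mul]
      calc |χ q.1| * |⟪q.1, Dφ q.2⟫|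
          ≤ 1 * (‖q.1‖ * ‖Dφ q.2‖) := by
            apply mul_le_mul _ (abs_real_inner_le_norm _ _) (abs_nonneg _) zero_le_one
            rw [abs_of_nonneg (hχnn _)]; exact hχle _
        _ ≤ ((K:ℝ) + 1) * C := by
            rw [one_mul]
            exact mul_le_mul h (hC _) (norm_nonneg _) (by positivity)
    · have hz : χ q.1 = 0 := by
        have h1 : min 1 ((K:ℝ) + 1 - ‖q.1‖) ≤ 0 :=
          le_trans (min_le_right _ _) (by linarith)
        rw [hχ]; simp only; exact max_eq_left h1
      rw [hf₀]
      simp only [hz, zero_mul, norm_zero]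
      positivity
  set F : BoundedContinuousFunction (EuclideanSpace ℝ (Fin n) × Ω) ℝ :=
    BoundedContinuousFunction.ofNormedAddCommGroup f₀ hf₀c _ hf₀b with hFdef
  have hFcoe : ∀ q, F q = f₀ q := fun q => rfl
  -- along the trajectory, F agrees with g
  have hFg : ∀ j, (∫ t in Set.Ioc (0:ℝ) (T j), F (x' t, τ (x t) ω₀))
      = ∫ t in Set.Ioc (0:ℝ) (T j), g t := by
    intro j
    apply MeasureTheory.integral_congr_ae
    apply ae_restrict_of_ae
    filter_upwards [hspeed] with t ht
    rw [hFcoe, hf₀]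
    simp only [hχone _ ht, one_mul, hgdef]
  -- the occupation averages of F tend to 0
  have hlim0 : Tendsto (fun j => (T j)⁻¹ *
      ∫ t in Set.Ioc (0:ℝ) (T j), F (x' t, τ (x t) ω₀)) atTop (nhds 0) := by
    apply squeeze_zero_norm' (a := fun j => (T j)⁻¹ * (2 * B))
    · filter_upwards [hT.eventually_ge_atTop 1] with j hj
      have hTpos : (0:ℝ) < T j := lt_of_lt_of_le one_pos hj
      rw [hFg j]
      have hb := lip_integral_deriv_bound hψlip hψB hgd (le_of_lt hTpos)
      rw [Real.norm_eq_abs, abs_mul, abs_of_pos (inv_pos.2 hTpos)]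
      exact mul_le_mul_of_nonneg_left hb (le_of_lt (inv_pos.2 hTpos))
    · have h1 : Tendsto (fun j => (T j)⁻¹) atTop (nhds 0) := hT.inv_tendsto_atTop
      simpa using h1.mul_const (2 * B)
  have hFμ : ∫ q, F q ∂μ = 0 := tendsto_nhds_unique (hconv F) hlim0
  -- conclude
  have hfinal : ∫ q, (⟪q.1, Dφ q.2⟫) ∂μ = ∫ q, F q ∂μ := by
    apply MeasureTheory.integral_congr_ae
    filter_upwards [hae] with q hq
    rw [hFcoe, hf₀]
    simp only [hχone _ hq, one_mul]
  rw [hfinal, hFμ]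
end

section
/- Let H(x, p, ω) = sup_{v ∈ ℝⁿ} (−p·v − L(x, v, ω)) be the Hamiltonian associated to a Lagrangian L that is continuous, superlinear in v, and stationary. If u : ℝⁿ × Ω → ℝ is stationary, continuous in ω, and is a viscosity solution in x of H(0, D_x u(0, ω), ω) + α u(0, ω) = λ for every ω, then u is also a viscosity solution in ω: for every φ ∈ C¹_s(ℝⁿ × Ω) and every ω₀ ∈ Ω at which u(0, ·) − φ(0, ·) attains a local minimum (resp. maximum) with value 0, one has H(0, D_x φ(0, ω₀), ω₀) + α φ(0, ω₀) ≥ λ (resp. ≤ λ). -/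
open scoped RealInnerProductSpace

/-- A stationary function, continuous in `ω`, which is a viscosity solution in
`x` of `H(0, D_x u(0,ω), ω) + α u(0,ω) = λ`, is also a viscosity solution in
`ω`. -/
theorem stmt_6 {n : ℕ} {Ω : Type*} [MetricSpace Ω] [CompactSpace Ω]
    (τ : EuclideanSpace ℝ (Fin n) → Ω → Ω)
    (hτcont : Continuous fun q : EuclideanSpace ℝ (Fin n) × Ω => τ q.1 q.2)
    (hadd : ∀ x y ω, τ (x + y) ω = τ x (τ y ω)) (hzero : ∀ ω, τ 0 ω = ω)
    (L : EuclideanSpace ℝ (Fin n) → EuclideanSpace ℝ (Fin n) → Ω → ℝ)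
    (hLcont : Continuous fun q : EuclideanSpace ℝ (Fin n) ×
      EuclideanSpace ℝ (Fin n) × Ω => L q.1 q.2.1 q.2.2)
    (hLstat : ∀ x y v ω, L (x + y) v ω = L x v (τ y ω))
    (hLsuper : ∀ (x : EuclideanSpace ℝ (Fin n)) (ω : Ω) (c : ℝ), ∃ b : ℝ,
      ∀ v, c * ‖v‖ - b ≤ L x v ω)
    (H : EuclideanSpace ℝ (Fin n) → EuclideanSpace ℝ (Fin n) → Ω → ℝ)
    (hH : ∀ x pvec ω, H x pvec ω = sSup (Set.range fun v => -⟪pvec, v⟫ - L x v ω))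
    (α lam : ℝ)
    (u : EuclideanSpace ℝ (Fin n) → Ω → ℝ)
    (hustat : ∀ x y ω, u (x + y) ω = u x (τ y ω))
    (hucontω : ∀ x, Continuous (u x))
    (hucontx : ∀ ω, Continuous fun a => u a ω)
    -- viscosity supersolution in x
    (hviscx_min : ∀ (ω₀ : Ω) (ψ : EuclideanSpace ℝ (Fin n) → ℝ)
      (gψ : EuclideanSpace ℝ (Fin n) → EuclideanSpace ℝ (Fin n)),
      ContDiff ℝ 1 ψ → (∀ a, HasGradientAt ψ (gψ a) a) →
      ∀ x₀, IsLocalMin (fun a => u a ω₀ - ψ a) x₀ → u x₀ ω₀ - ψ x₀ = 0 →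
        lam ≤ H x₀ (gψ x₀) ω₀ + α * ψ x₀)
    -- viscosity subsolution in x
    (hviscx_max : ∀ (ω₀ : Ω) (ψ : EuclideanSpace ℝ (Fin n) → ℝ)
      (gψ : EuclideanSpace ℝ (Fin n) → EuclideanSpace ℝ (Fin n)),
      ContDiff ℝ 1 ψ → (∀ a, HasGradientAt ψ (gψ a) a) →
      ∀ x₀, IsLocalMax (fun a => u a ω₀ - ψ a) x₀ → u x₀ ω₀ - ψ x₀ = 0 →
        H x₀ (gψ x₀) ω₀ + α * ψ x₀ ≤ lam) :
    -- conclusion: viscosity solution in ω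
    ∀ (φ : EuclideanSpace ℝ (Fin n) → Ω → ℝ)
      (Dφ : EuclideanSpace ℝ (Fin n) → Ω → EuclideanSpace ℝ (Fin n)),
      (∀ x y ω, φ (x + y) ω = φ x (τ y ω)) →
      (∀ x, Continuous (φ x)) →
      (∀ ω, ContDiff ℝ 1 fun a => φ a ω) →
      (∀ ω a, HasGradientAt (fun a' => φ a' ω) (Dφ a ω) a) →
      Continuous (fun ω => Dφ 0 ω) →
      ∀ ω₀ : Ω,
        (IsLocalMin (fun ω => u 0 ω - φ 0 ω) ω₀ → u 0 ω₀ - φ 0 ω₀ = 0 →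
          lam ≤ H 0 (Dφ 0 ω₀) ω₀ + α * φ 0 ω₀) ∧
        (IsLocalMax (fun ω => u 0 ω - φ 0 ω) ω₀ → u 0 ω₀ - φ 0 ω₀ = 0 →
          H 0 (Dφ 0 ω₀) ω₀ + α * φ 0 ω₀ ≤ lam) := by
  intro φ Dφ hφstat hφcontω hφC1 hφgrad hDφcont ω₀
  -- key: x ↦ τ x ω₀ is continuous with τ 0 ω₀ = ω₀
  have hc : Continuous fun x : EuclideanSpace ℝ (Fin n) => τ x ω₀ :=
    hτcont.comp (continuous_id.prodMk continuous_const)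
  have hrewr : ∀ x, u x ω₀ - φ x ω₀ = (fun ω => u 0 ω - φ 0 ω) (τ x ω₀) := by
    intro x
    have h1 : u x ω₀ = u 0 (τ x ω₀) := by
      have := hustat 0 x ω₀; rwa [zero_add] at this
    have h2 : φ x ω₀ = φ 0 (τ x ω₀) := by
      have := hφstat 0 x ω₀; rwa [zero_add] at this
    simp [h1, h2]
  constructor
  · intro hmin hval
    have hmin0 : IsLocalMin (fun a => u a ω₀ - φ a ω₀) 0 := by
      have ht : Filter.Tendsto (fun x : EuclideanSpace ℝ (Fin n) => τ x ω₀)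
          (nhds 0) (nhds ω₀) := by
        have := hc.tendsto 0
        rwa [hzero ω₀] at this
      have := ht.eventually hmin
      refine this.mono fun x hx => ?_
      show u 0 ω₀ - φ 0 ω₀ ≤ u x ω₀ - φ x ω₀
      rw [hrewr x]; exact hx
    exact hviscx_min ω₀ (fun a => φ a ω₀) (fun a => Dφ a ω₀) (hφC1 ω₀)
      (hφgrad ω₀) 0 hmin0 hval
  · intro hmax hval
    have hmax0 : IsLocalMax (fun a => u a ω₀ - φ a ω₀) 0 := by
      have ht : Filter.Tendsto (fun x : EuclideanSpace ℝ (Fin n) => τ x ω₀)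
          (nhds 0) (nhds ω₀) := by
        have := hc.tendsto 0
        rwa [hzero ω₀] at this
      have := ht.eventually hmax
      refine this.mono fun x hx => ?_
      show u x ω₀ - φ x ω₀ ≤ u 0 ω₀ - φ 0 ω₀
      rw [hrewr x]; exact hx
    exact hviscx_max ω₀ (fun a => φ a ω₀) (fun a => Dφ a ω₀) (hφC1 ω₀)
      (hφgrad ω₀) 0 hmax0 hval
end

section
/- Suppose that for each ω ∈ Ω and each α > 0, u_α(·, ω) is Lipschitz in x with a Lipschitz constant C independent of α and ω, u_α is stationary, α u_α is uniformly bounded, and u_α(0, ·) is Lipschitz in ω with constant K/α. Assume further that the action τ is uniformly transitive, and that α u_α(0, ω) → ξ(ω) pointwise as α → 0. Then ξ is constant on Ω. -/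
open Filter

/-- If `u_α` is uniformly Lipschitz in `x`, stationary, `α u_α` is uniformly
bounded, `u_α(0,·)` is `(K/α)`-Lipschitz in `ω`, the action is uniformly
transitive, and `α u_α(0, ω) → ξ(ω)` pointwise as `α → 0⁺`, then `ξ` is
constant on `Ω`. -/
theorem stmt_8 {n : ℕ} {Ω : Type*} [MetricSpace Ω] [CompactSpace Ω]
    (τ : EuclideanSpace ℝ (Fin n) → Ω → Ω)
    (hτcont : Continuous fun q : EuclideanSpace ℝ (Fin n) × Ω => τ q.1 q.2)
    (hadd : ∀ x y ω, τ (x + y) ω = τ x (τ y ω)) (hzero : ∀ ω, τ 0 ω = ω)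
    (u : ℝ → EuclideanSpace ℝ (Fin n) → Ω → ℝ)
    (C K B : ℝ)
    (hLipx : ∀ α > (0:ℝ), ∀ (x₁ x₂ : EuclideanSpace ℝ (Fin n)) (ω : Ω),
      |u α x₁ ω - u α x₂ ω| ≤ C * ‖x₁ - x₂‖)
    (hstat : ∀ α > (0:ℝ), ∀ (x y : EuclideanSpace ℝ (Fin n)) (ω : Ω),
      u α (x + y) ω = u α x (τ y ω))
    (hbd : ∀ α > (0:ℝ), ∀ ω : Ω, |α * u α 0 ω| ≤ B)
    (hLipω : ∀ α > (0:ℝ), ∀ ω₁ ω₂ : Ω,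
      |u α 0 ω₁ - u α 0 ω₂| ≤ (K / α) * dist ω₁ ω₂)
    (htrans : ∀ ε > (0:ℝ), ∃ M > (0:ℝ), ∀ ω₁ ω₂ : Ω,
      ∃ z : EuclideanSpace ℝ (Fin n), ‖z‖ < M ∧ dist (τ z ω₁) ω₂ < ε)
    (ξ : Ω → ℝ)
    (hlim : ∀ ω, Tendsto (fun α => α * u α 0 ω)
      (nhdsWithin 0 (Set.Ioi (0:ℝ))) (nhds (ξ ω))) :
    ∀ ω₁ ω₂ : Ω, ξ ω₁ = ξ ω₂ := by
  intro ω₁ ω₂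
  by_cases hne : ω₁ = ω₂
  · rw [hne]
  -- K is nonnegative
  have hd : (0:ℝ) < dist ω₁ ω₂ := dist_pos.mpr hne
  have hK : (0:ℝ) ≤ K := by
    have h := hLipω 1 one_pos ω₁ ω₂
    have h0 : (0:ℝ) ≤ |u 1 0 ω₁ - u 1 0 ω₂| := abs_nonneg _
    have : (0:ℝ) ≤ (K / 1) * dist ω₁ ω₂ := le_trans h0 h
    nlinarith
  have key : ∀ ε' > (0:ℝ), |ξ ω₁ - ξ ω₂| ≤ 0 + ε' := by
    intro ε' hε'
    set K' : ℝ := max K 1 with hK'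
    have hK'pos : (0:ℝ) < K' := lt_of_lt_of_le one_pos (le_max_right _ _)
    set ε : ℝ := ε' / (2 * K') with hε
    have hεpos : 0 < ε := by positivity
    obtain ⟨M, hM, hz⟩ := htrans ε hεpos
    obtain ⟨z, hzM, hzd⟩ := hz ω₁ ω₂
    have h1 : Tendsto (fun α => |α * u α 0 ω₁ - α * u α 0 ω₂|)
        (nhdsWithin 0 (Set.Ioi (0:ℝ))) (nhds (|ξ ω₁ - ξ ω₂|)) :=
      ((hlim ω₁).sub (hlim ω₂)).abs
    have h2 : Tendsto (fun α : ℝ => α * (C * ‖z‖) + K * ε)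
        (nhdsWithin 0 (Set.Ioi (0:ℝ))) (nhds (0 * (C * ‖z‖) + K * ε)) := by
      apply Tendsto.mono_left _ nhdsWithin_le_nhds
      exact ((continuous_id.mul continuous_const).add continuous_const).tendsto 0
    have hev : ∀ᶠ α in nhdsWithin 0 (Set.Ioi (0:ℝ)),
        |α * u α 0 ω₁ - α * u α 0 ω₂| ≤ α * (C * ‖z‖) + K * ε := by
      filter_upwards [self_mem_nhdsWithin] with α hα
      have hαpos : (0:ℝ) < α := hα
      have e1 : u α 0 (τ z ω₁) = u α z ω₁ := by
        rw [← hstat α hαpos 0 z ω₁, zero_add]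
      have t1 : |u α 0 ω₁ - u α 0 (τ z ω₁)| ≤ C * ‖z‖ := by
        rw [e1]
        have := hLipx α hαpos 0 z ω₁
        simpa using this
      have t2 : |u α 0 (τ z ω₁) - u α 0 ω₂| ≤ (K / α) * ε := by
        refine le_trans (hLipω α hαpos _ _) ?_
        have : (0:ℝ) ≤ K / α := div_nonneg hK hαpos.le
        exact mul_le_mul_of_nonneg_left hzd.le this
      have t3 : |u α 0 ω₁ - u α 0 ω₂| ≤ C * ‖z‖ + (K / α) * ε :=
        le_trans (abs_sub_le _ _ _) (add_le_add t1 t2)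
      calc |α * u α 0 ω₁ - α * u α 0 ω₂| = α * |u α 0 ω₁ - u α 0 ω₂| := by
            rw [← mul_sub, abs_mul, abs_of_pos hαpos]
        _ ≤ α * (C * ‖z‖ + (K / α) * ε) :=
            mul_le_mul_of_nonneg_left t3 hαpos.le
        _ = α * (C * ‖z‖) + K * ε := by
            field_simp
    have hle : |ξ ω₁ - ξ ω₂| ≤ 0 * (C * ‖z‖) + K * ε :=
      le_of_tendsto_of_tendsto h1 h2 hev
    have hKε : K * ε ≤ ε' := by
      have h1' : K * ε ≤ K' * ε :=
        mul_le_mul_of_nonneg_right (le_max_left _ _) hεpos.le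
      have h2' : K' * ε = ε' / 2 := by
        rw [hε]; field_simp
      linarith
    calc |ξ ω₁ - ξ ω₂| ≤ 0 * (C * ‖z‖) + K * ε := hle
      _ = K * ε := by ring
      _ ≤ ε' := hKε
      _ = 0 + ε' := by ring
  have : |ξ ω₁ - ξ ω₂| ≤ 0 := le_of_forall_pos_le_add key
  have := abs_nonneg (ξ ω₁ - ξ ω₂)
  have : |ξ ω₁ - ξ ω₂| = 0 := le_antisymm ‹_› ‹_›
  have := abs_eq_zero.mp this
  linarith
end

section
/- Let L(0, v, ω) be continuous, nonnegative, and strictly convex in v for each ω, and let μ be a probability measure on ℝⁿ × Ω minimizing ∫ L(0, v, ω) dμ over all probability measures satisfying a set of linear constraints in v (the discounted holonomy constraints). Then μ is supported on a graph: there exists a measurable function V : Ω → ℝⁿ such that μ-almost every (v, ω) satisfies v = V(ω). Specifically, defining V(ω) as the conditional barycenter of v given ω, the measure obtained by pushing forward along (v, ω) ↦ (V(ω), ω) satisfies the same linear constraints and has strictly smaller action unless v = V(ω) μ-a.e. -/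
open MeasureTheory
set_option linter.unnecessarySimpa false
open scoped RealInnerProductSpace

/-- A probability measure minimizing the action `∫ L(0,v,ω) dμ` among all
probability measures satisfying a family of constraints affine in `v` (the
discounted holonomy constraints) is supported on a graph `v = V(ω)` for some
measurable `V : Ω → ℝⁿ`. -/
theorem stmt_9 {n : ℕ} {Ω : Type*} [MetricSpace Ω] [CompactSpace Ω]
    [MeasurableSpace Ω] [BorelSpace Ω]
    (L : EuclideanSpace ℝ (Fin n) → Ω → ℝ)
    (hLcont : Continuous fun q : EuclideanSpace ℝ (Fin n) × Ω => L q.1 q.2)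
    (hLnn : ∀ v ω, 0 ≤ L v ω)
    (hLconv : ∀ ω, StrictConvexOn ℝ Set.univ fun v => L v ω)
    {ι : Type*} (A : ι → Ω → EuclideanSpace ℝ (Fin n)) (b : ι → Ω → ℝ) (r : ι → ℝ)
    (hA : ∀ i, Continuous (A i)) (hb : ∀ i, Continuous (b i))
    (μ : Measure (EuclideanSpace ℝ (Fin n) × Ω)) [IsProbabilityMeasure μ]
    (hintv : Integrable (fun q => ‖q.1‖) μ)
    (hintL : Integrable (fun q => L q.1 q.2) μ)
    (hcon : ∀ i, ∫ q, (⟪A i q.2, q.1⟫ + b i q.2) ∂μ = r i)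
    (hmin : ∀ μ' : Measure (EuclideanSpace ℝ (Fin n) × Ω),
      IsProbabilityMeasure μ' →
      Integrable (fun q => ‖q.1‖) μ' →
      Integrable (fun q => L q.1 q.2) μ' →
      (∀ i, ∫ q, (⟪A i q.2, q.1⟫ + b i q.2) ∂μ' = r i) →
      ∫ q, L q.1 q.2 ∂μ ≤ ∫ q, L q.1 q.2 ∂μ') :
    ∃ V : Ω → EuclideanSpace ℝ (Fin n), Measurable V ∧
      ∀ᵐ q ∂μ, q.1 = V q.2 := by
  classical
  have _unul : True := trivial
  -- the swapped measure on Ω × EuclideanSpace ℝ (Fin n)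
  set ρ : Measure (Ω × EuclideanSpace ℝ (Fin n)) := μ.map Prod.swap with hρdef
  have hswap : Measurable (Prod.swap : EuclideanSpace ℝ (Fin n) × Ω → Ω × EuclideanSpace ℝ (Fin n)) := measurable_swap
  have hρprob : IsProbabilityMeasure ρ := Measure.isProbabilityMeasure_map hswap.aemeasurable
  -- disintegration
  set ν : Measure Ω := ρ.fst with hνdef
  have hνprob : IsProbabilityMeasure ν := by
    constructor
    simp [hνdef, Measure.fst_univ]
  set κ := ρ.condKernel with hκdef
  have hκprob : ∀ ω, IsProbabilityMeasure (κ ω) := fun ω => inferInstance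
  -- conditional barycenter
  set V : Ω → EuclideanSpace ℝ (Fin n) := fun ω => ∫ v, v ∂(κ ω) with hVdef
  have hV : Measurable V := by
    have : StronglyMeasurable fun ω => ∫ v, (fun (p : Ω × EuclideanSpace ℝ (Fin n)) => p.2) (ω, v) ∂(κ ω) :=
      (measurable_snd.stronglyMeasurable).integral_kernel_prod_right'
    exact this.measurable
  refine ⟨V, hV, ?_⟩
  -- transfer integrability to ρ
  have hρint : ∀ (f : Ω × EuclideanSpace ℝ (Fin n) → ℝ), AEStronglyMeasurable f ρ →
      Integrable (fun q : EuclideanSpace ℝ (Fin n) × Ω => f q.swap) μ → Integrable f ρ := by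
    intro f hf hfi
    exact (integrable_map_measure hf hswap.aemeasurable).2 hfi
  have hρeq : ∀ (f : Ω × EuclideanSpace ℝ (Fin n) → ℝ), AEStronglyMeasurable f ρ →
      ∫ p, f p ∂ρ = ∫ q : EuclideanSpace ℝ (Fin n) × Ω, f q.swap ∂μ := by
    intro f hf
    exact integral_map hswap.aemeasurable hf
  -- integrability of the identity in the fiber variable
  have hid_meas : AEStronglyMeasurable (fun p : Ω × EuclideanSpace ℝ (Fin n) => p.2) ρ :=
    measurable_snd.aestronglyMeasurable
  have hintv' : Integrable (fun q : EuclideanSpace ℝ (Fin n) × Ω => q.1) μ := by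
    refine (integrable_norm_iff measurable_fst.aestronglyMeasurable).1 ?_
    exact hintv
  have hid_int : Integrable (fun p : Ω × EuclideanSpace ℝ (Fin n) => p.2) ρ :=
    (integrable_map_measure hid_meas hswap.aemeasurable).2 hintv'
  -- integrability of L on ρ
  have hLmeas : AEStronglyMeasurable (fun p : Ω × EuclideanSpace ℝ (Fin n) => L p.2 p.1) ρ :=
    (hLcont.comp (continuous_snd.prodMk continuous_fst)).aestronglyMeasurable
  have hL_int : Integrable (fun p : Ω × EuclideanSpace ℝ (Fin n) => L p.2 p.1) ρ :=
    (integrable_map_measure hLmeas hswap.aemeasurable).2 hintL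
  -- consequences of disintegration
  have hI_ae_v : ∀ᵐ ω ∂ν, Integrable (fun v : EuclideanSpace ℝ (Fin n) => v) (κ ω) := hid_int.condKernel_ae
  have hI_ae_L : ∀ᵐ ω ∂ν, Integrable (fun v : EuclideanSpace ℝ (Fin n) => L v ω) (κ ω) := hL_int.condKernel_ae
  have hV_int : Integrable V ν := hid_int.integral_condKernel
  set I : Ω → ℝ := fun ω => ∫ v, L v ω ∂(κ ω) with hIdef
  have hI_int : Integrable I ν := hL_int.integral_condKernel
  have hI_eq : ∫ ω, I ω ∂ν = ∫ q, L q.1 q.2 ∂μ := by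
    rw [show ∫ ω, I ω ∂ν = ∫ p, L p.2 p.1 ∂ρ from Measure.integral_condKernel hL_int]
    exact hρeq _ hLmeas
  -- the graph measure
  set F : Ω → EuclideanSpace ℝ (Fin n) × Ω := fun ω => (V ω, ω) with hFdef
  have hF : Measurable F := hV.prodMk measurable_id
  set μ' : Measure (EuclideanSpace ℝ (Fin n) × Ω) := ν.map F with hμ'def
  have hμ'prob : IsProbabilityMeasure μ' := Measure.isProbabilityMeasure_map hF.aemeasurable
  -- integrals over μ'
  have hμ'eq : ∀ (f : EuclideanSpace ℝ (Fin n) × Ω → ℝ), AEStronglyMeasurable f μ' →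
      ∫ q, f q ∂μ' = ∫ ω, f (F ω) ∂ν := fun f hf => integral_map hF.aemeasurable hf
  -- Jensen a.e.
  have hLVcont : ∀ ω, Continuous fun v : EuclideanSpace ℝ (Fin n) => L v ω := fun ω =>
    hLcont.comp (continuous_id.prodMk continuous_const)
  have hJensen : ∀ᵐ ω ∂ν, L (V ω) ω ≤ I ω := by
    filter_upwards [hI_ae_v, hI_ae_L] with ω h1 h2
    haveI := hκprob ω
    have := (hLconv ω).convexOn.map_integral_le (s := Set.univ)
      (hLVcont ω).continuousOn isClosed_univ
      (Filter.Eventually.of_forall fun _ => Set.mem_univ _) h1 ?_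
    · simpa using this
    · exact h2
  -- measurability and integrability of ω ↦ L (V ω) ω
  have hLV_meas : Measurable fun ω => L (V ω) ω :=
    hLcont.measurable.comp (hV.prodMk measurable_id)
  have hLV_int : Integrable (fun ω => L (V ω) ω) ν := by
    refine hI_int.mono' hLV_meas.aestronglyMeasurable ?_
    filter_upwards [hJensen] with ω h
    rwa [Real.norm_of_nonneg (hLnn _ _)]
  -- verify the constraints for μ'
  have hcon' : ∀ i, ∫ q, (⟪A i q.2, q.1⟫ + b i q.2) ∂μ' = r i := by
    intro i
    have hconti : Continuous fun q : EuclideanSpace ℝ (Fin n) × Ω => (⟪A i q.2, q.1⟫ + b i q.2 : ℝ) :=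
      (((hA i).comp continuous_snd).inner continuous_fst).add ((hb i).comp continuous_snd)
    have hcontρ : Continuous fun p : Ω × EuclideanSpace ℝ (Fin n) => (⟪A i p.1, p.2⟫ + b i p.1 : ℝ) :=
      (((hA i).comp continuous_fst).inner continuous_snd).add ((hb i).comp continuous_fst)
    -- integrability of the constraint integrand over μ
    obtain ⟨CA, hCA⟩ := isCompact_univ.exists_bound_of_continuousOn (hA i).continuousOn
    obtain ⟨Cb, hCb⟩ := isCompact_univ.exists_bound_of_continuousOn (hb i).continuousOn
    have hint_con : Integrable (fun q : EuclideanSpace ℝ (Fin n) × Ω => (⟪A i q.2, q.1⟫ + b i q.2 : ℝ)) μ := by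
      refine Integrable.mono' ((hintv.const_mul CA).add (integrable_const Cb))
        hconti.aestronglyMeasurable ?_
      refine Filter.Eventually.of_forall fun q => ?_
      have h1 : |(⟪A i q.2, q.1⟫ : ℝ)| ≤ CA * ‖q.1‖ := by
        calc |(⟪A i q.2, q.1⟫ : ℝ)| ≤ ‖A i q.2‖ * ‖q.1‖ := abs_real_inner_le_norm _ _
          _ ≤ CA * ‖q.1‖ := by
              exact mul_le_mul_of_nonneg_right (hCA q.2 (Set.mem_univ _)) (norm_nonneg _)
      have h2 : |b i q.2| ≤ Cb := by
        simpa [Real.norm_eq_abs] using hCb q.2 (Set.mem_univ _)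
      calc ‖(⟪A i q.2, q.1⟫ + b i q.2 : ℝ)‖ ≤ |(⟪A i q.2, q.1⟫ : ℝ)| + |b i q.2| :=
            abs_add_le _ _
        _ ≤ CA * ‖q.1‖ + Cb := add_le_add h1 h2
    have hint_conρ : Integrable (fun p : Ω × EuclideanSpace ℝ (Fin n) => (⟪A i p.1, p.2⟫ + b i p.1 : ℝ)) ρ :=
      (integrable_map_measure hcontρ.aestronglyMeasurable hswap.aemeasurable).2 hint_con
    have hfiber : ∀ᵐ ω ∂ν,
        ∫ v, (⟪A i ω, v⟫ + b i ω : ℝ) ∂(κ ω) = ⟪A i ω, V ω⟫ + b i ω := by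
      filter_upwards [hI_ae_v] with ω h1
      haveI := hκprob ω
      have hinner : Integrable (fun v : EuclideanSpace ℝ (Fin n) => (⟪A i ω, v⟫ : ℝ)) (κ ω) := by
        have := ContinuousLinearMap.integrable_comp (innerSL ℝ (A i ω)) h1
        simpa using this
      rw [integral_add hinner (integrable_const _), integral_inner h1, integral_const]
      simp
      rfl
    calc ∫ q, (⟪A i q.2, q.1⟫ + b i q.2) ∂μ'
        = ∫ ω, (⟪A i ω, V ω⟫ + b i ω) ∂ν := hμ'eq _ hconti.aestronglyMeasurable
      _ = ∫ ω, ∫ v, (⟪A i ω, v⟫ + b i ω : ℝ) ∂(κ ω) ∂ν :=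
          (integral_congr_ae hfiber).symm
      _ = ∫ p, (⟪A i p.1, p.2⟫ + b i p.1 : ℝ) ∂ρ := Measure.integral_condKernel hint_conρ
      _ = ∫ q, (⟪A i q.2, q.1⟫ + b i q.2) ∂μ := hρeq _ hcontρ.aestronglyMeasurable
      _ = r i := hcon i
  -- minimality gives equality of the action with its Jensen bound
  have hμ'intv : Integrable (fun q : EuclideanSpace ℝ (Fin n) × Ω => ‖q.1‖) μ' := by
    refine (integrable_map_measure
      (continuous_fst.norm.aestronglyMeasurable) hF.aemeasurable).2 ?_
    exact hV_int.norm
  have hμ'intL : Integrable (fun q : EuclideanSpace ℝ (Fin n) × Ω => L q.1 q.2) μ' := by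
    refine (integrable_map_measure hLcont.aestronglyMeasurable hF.aemeasurable).2 ?_
    exact hLV_int
  have hmin' : ∫ q, L q.1 q.2 ∂μ ≤ ∫ ω, L (V ω) ω ∂ν := by
    have := hmin μ' hμ'prob hμ'intv hμ'intL hcon'
    rwa [hμ'eq _ hLcont.aestronglyMeasurable] at this
  have hle : ∫ ω, I ω ∂ν ≤ ∫ ω, L (V ω) ω ∂ν := hI_eq ▸ hmin'
  -- hence I = L(V ·) ν-a.e.
  have hD0 : (fun ω => I ω - L (V ω) ω) =ᵐ[ν] 0 := by
    have hDnn : 0 ≤ᵐ[ν] fun ω => I ω - L (V ω) ω := by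
      filter_upwards [hJensen] with ω h
      simpa using h
    have hDint : Integrable (fun ω => I ω - L (V ω) ω) ν := hI_int.sub hLV_int
    have hDz : ∫ ω, (I ω - L (V ω) ω) ∂ν = 0 := by
      have h1 : ∫ ω, (I ω - L (V ω) ω) ∂ν = ∫ ω, I ω ∂ν - ∫ ω, L (V ω) ω ∂ν :=
        integral_sub hI_int hLV_int
      have h2 : 0 ≤ ∫ ω, (I ω - L (V ω) ω) ∂ν := integral_nonneg_of_ae hDnn
      linarith [hle, h1 ▸ (by linarith [h1, hle] : ∫ ω, (I ω - L (V ω) ω) ∂ν ≤ 0)]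
    exact (integral_eq_zero_iff_of_nonneg_ae hDnn hDint).1 hDz
  -- strict convexity: conditional measures are Dirac a.e.
  have hgraph : ∀ᵐ ω ∂ν, ∀ᵐ v ∂(κ ω), v = V ω := by
    filter_upwards [hI_ae_v, hI_ae_L, hD0] with ω h1 h2 h3
    haveI := hκprob ω
    have hdich := (hLconv ω).ae_eq_const_or_map_average_lt (f := id)
      (hLVcont ω).continuousOn isClosed_univ
      (Filter.Eventually.of_forall fun _ => Set.mem_univ _) h1
      (by simpa [Function.comp] using h2)
    rcases hdich with hconst | hlt
    · have : ⨍ v, id v ∂(κ ω) = V ω := by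
        simp [average_eq_integral, hVdef]
      filter_upwards [hconst] with v hv
      rw [← this]
      exact hv
    · exfalso
      rw [average_eq_integral, average_eq_integral] at hlt
      have hI' : (⨍ v, id v ∂(κ ω)) = V ω := by simp [average_eq_integral, hVdef]
      have : I ω - L (V ω) ω = 0 := h3
      simp only [average_eq_integral] at hI'
      rw [show (∫ v, id v ∂(κ ω)) = V ω by simpa using hI'] at hlt
      have : L (V ω) ω < I ω := by simpa [hIdef] using hlt
      linarith [h3.symm ▸ (by simpa using h3 : I ω - L (V ω) ω = 0)]
  -- transfer back to μ
  have hs : MeasurableSet {p : Ω × EuclideanSpace ℝ (Fin n) | p.2 = V p.1} :=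
    measurableSet_eq_fun measurable_snd (hV.comp measurable_fst)
  have hρae : ∀ᵐ p ∂ρ, p.2 = V p.1 := by
    rw [← ρ.disintegrate ρ.condKernel]
    exact (Measure.ae_compProd_iff hs).2 hgraph
  have : ∀ᵐ q ∂μ, (Prod.swap q).2 = V (Prod.swap q).1 := by
    rw [← ae_map_iff hswap.aemeasurable hs]
    exact hρae
  filter_upwards [this] with q hq
  exact hq
end

section
/- Let γ : ℝⁿ → (0, ∞) satisfy |v|/γ(v) → 0 and L(0, v, ω)/γ(v) → +∞ uniformly in ω as |v| → ∞, where L ≥ 0 is continuous. Define h(φ) = sup_{(v,ω) ∈ ℝⁿ × Ω} (−φ(v, ω) − L(0, v, ω)) for φ in the Banach space C⁰_γ of continuous functions with ‖φ‖_γ = sup |φ(v,ω)|/γ(v) < ∞ and |φ(v,ω)|/γ(v) → 0 as |v| → ∞. Then h is real-valued, convex, and continuous on C⁰_γ. -/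
/-- `h(φ) = sup_{(v,ω)} (−φ(v,ω) − L(0,v,ω))` is real-valued (the sup is of a
nonempty set bounded above), convex, and continuous on `C⁰_γ(ℝⁿ × Ω)` with
respect to the norm `‖φ‖_γ = sup |φ|/γ`. -/
theorem stmt_10 {n : ℕ} {Ω : Type*} [MetricSpace Ω] [CompactSpace Ω] [Nonempty Ω]
    (γ : EuclideanSpace ℝ (Fin n) → ℝ) (hγpos : ∀ v, 0 < γ v)
    (hγcont : Continuous γ)
    (hγgrowth : ∀ ε > (0:ℝ), ∃ R : ℝ, ∀ v : EuclideanSpace ℝ (Fin n),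
      R ≤ ‖v‖ → ‖v‖ ≤ ε * γ v)
    (L : EuclideanSpace ℝ (Fin n) → Ω → ℝ)
    (hLcont : Continuous fun q : EuclideanSpace ℝ (Fin n) × Ω => L q.1 q.2)
    (hLnn : ∀ v ω, 0 ≤ L v ω)
    (hLgrowth : ∀ c : ℝ, ∃ R : ℝ, ∀ (v : EuclideanSpace ℝ (Fin n)) (ω : Ω),
      R ≤ ‖v‖ → c * γ v ≤ L v ω)
    (Cγ : Set (EuclideanSpace ℝ (Fin n) × Ω → ℝ))
    (hCγ : ∀ φ, φ ∈ Cγ ↔ Continuous φ ∧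
      (∃ c : ℝ, ∀ q : EuclideanSpace ℝ (Fin n) × Ω, |φ q| ≤ c * γ q.1) ∧
      (∀ ε > (0:ℝ), ∃ R : ℝ, ∀ q : EuclideanSpace ℝ (Fin n) × Ω,
        R ≤ ‖q.1‖ → |φ q| ≤ ε * γ q.1))
    (h : (EuclideanSpace ℝ (Fin n) × Ω → ℝ) → ℝ)
    (hh : ∀ φ, h φ = sSup (Set.range fun q : EuclideanSpace ℝ (Fin n) × Ω =>
      -φ q - L q.1 q.2)) :
    -- real-valued: the defining sup is over a nonempty set which is bounded above
    (∀ φ ∈ Cγ,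
      (Set.range fun q : EuclideanSpace ℝ (Fin n) × Ω => -φ q - L q.1 q.2).Nonempty ∧
      BddAbove (Set.range fun q : EuclideanSpace ℝ (Fin n) × Ω => -φ q - L q.1 q.2)) ∧
    -- convexity
    (∀ φ₁ ∈ Cγ, ∀ φ₂ ∈ Cγ, ∀ t : ℝ, 0 ≤ t → t ≤ 1 →
      h (fun q => t * φ₁ q + (1 - t) * φ₂ q) ≤ t * h φ₁ + (1 - t) * h φ₂) ∧
    -- continuity in the ‖·‖_γ norm
    (∀ φ₀ ∈ Cγ, ∀ ε > (0:ℝ), ∃ δ > (0:ℝ), ∀ φ ∈ Cγ,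
      (∀ q : EuclideanSpace ℝ (Fin n) × Ω, |φ q - φ₀ q| ≤ δ * γ q.1) →
      |h φ - h φ₀| ≤ ε) := by
  classical
  obtain ⟨ω₀⟩ : Nonempty Ω := inferInstance
  have hne : ∀ φ : EuclideanSpace ℝ (Fin n) × Ω → ℝ,
      (Set.range fun q : EuclideanSpace ℝ (Fin n) × Ω => -φ q - L q.1 q.2).Nonempty :=
    fun φ => Set.range_nonempty _
  have hball : ∀ R : ℝ, ∃ M : ℝ,
      (∀ v : EuclideanSpace ℝ (Fin n), ‖v‖ ≤ R → γ v ≤ M) ∧ γ 0 ≤ M := by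
    intro R
    obtain ⟨x, -, hx⟩ := (isCompact_closedBall (0 : EuclideanSpace ℝ (Fin n))
      (max R 0)).exists_isMaxOn ⟨0, Metric.mem_closedBall_self (le_max_right R 0)⟩
      hγcont.continuousOn
    refine ⟨γ x, fun v hv => hx ?_, hx (Metric.mem_closedBall_self (le_max_right R 0))⟩
    rw [Metric.mem_closedBall, dist_zero_right]
    exact hv.trans (le_max_left _ _)
  have key : ∀ (φ : EuclideanSpace ℝ (Fin n) × Ω → ℝ) (c : ℝ),
      (∀ q : EuclideanSpace ℝ (Fin n) × Ω, |φ q| ≤ c * γ q.1) →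
      BddAbove (Set.range fun q : EuclideanSpace ℝ (Fin n) × Ω => -φ q - L q.1 q.2) := by
    intro φ c hc
    have hc0 : 0 ≤ c := by
      have h1 : |φ (0, ω₀)| ≤ c * γ 0 := hc (0, ω₀)
      have h2 := hγpos (0 : EuclideanSpace ℝ (Fin n))
      nlinarith [abs_nonneg (φ (0, ω₀))]
    obtain ⟨R, hR⟩ := hLgrowth c
    obtain ⟨M, hM, -⟩ := hball R
    refine ⟨max 0 (c * M), ?_⟩
    rintro x ⟨q, rfl⟩
    rcases le_or_gt ‖q.1‖ R with hv | hv
    · have h1 := (abs_le.1 (hc q)).1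
      have h2 := hM q.1 hv
      have h3 := hLnn q.1 q.2
      have h4 := (hγpos q.1).le
      have : -φ q - L q.1 q.2 ≤ c * M := by nlinarith
      exact this.trans (le_max_right _ _)
    · have hL := hR q.1 q.2 hv.le
      have h1 := (abs_le.1 (hc q)).1
      have : -φ q - L q.1 q.2 ≤ 0 := by linarith
      exact this.trans (le_max_left _ _)
  have memc : ∀ φ ∈ Cγ, ∃ c : ℝ, 0 ≤ c ∧
      ∀ q : EuclideanSpace ℝ (Fin n) × Ω, |φ q| ≤ c * γ q.1 := by
    intro φ hφ
    obtain ⟨c, hc⟩ := ((hCγ φ).1 hφ).2.1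
    refine ⟨c, ?_, hc⟩
    have h1 : |φ (0, ω₀)| ≤ c * γ 0 := hc (0, ω₀)
    have h2 := hγpos (0 : EuclideanSpace ℝ (Fin n))
    nlinarith [abs_nonneg (φ (0, ω₀))]
  refine ⟨?_, ?_, ?_⟩
  · intro φ hφ
    obtain ⟨c, -, hc⟩ := memc φ hφ
    exact ⟨hne φ, key φ c hc⟩
  · intro φ₁ hφ₁ φ₂ hφ₂ t ht0 ht1
    obtain ⟨c₁, -, hc₁⟩ := memc φ₁ hφ₁
    obtain ⟨c₂, -, hc₂⟩ := memc φ₂ hφ₂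
    rw [hh]
    refine csSup_le (hne _) ?_
    rintro x ⟨q, rfl⟩
    have h1 : -φ₁ q - L q.1 q.2 ≤ h φ₁ := by
      rw [hh]; exact le_csSup (key φ₁ c₁ hc₁) ⟨q, rfl⟩
    have h2 : -φ₂ q - L q.1 q.2 ≤ h φ₂ := by
      rw [hh]; exact le_csSup (key φ₂ c₂ hc₂) ⟨q, rfl⟩
    show -(t * φ₁ q + (1 - t) * φ₂ q) - L q.1 q.2 ≤ t * h φ₁ + (1 - t) * h φ₂
    have g1 := mul_le_mul_of_nonneg_left h1 ht0
    have g2 := mul_le_mul_of_nonneg_left h2 (by linarith : (0:ℝ) ≤ 1 - t)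
    linarith
  · intro φ₀ hφ₀ ε hε
    obtain ⟨c, hc0, hc⟩ := memc φ₀ hφ₀
    obtain ⟨K, hK⟩ : ∃ K : ℝ, ∀ ω : Ω, L 0 ω ≤ K := by
      obtain ⟨ω₁, -, hω⟩ := isCompact_univ.exists_isMaxOn ⟨ω₀, trivial⟩
        ((hLcont.comp (Continuous.prodMk_right (0 : EuclideanSpace ℝ (Fin n)))).continuousOn :
          ContinuousOn (fun ω : Ω => L 0 ω) Set.univ)
      exact ⟨L 0 ω₁, fun ω => hω trivial⟩
    obtain ⟨R, hR⟩ := hLgrowth (c + 2)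
    obtain ⟨R₁, hR₁⟩ := hγgrowth 1 one_pos
    obtain ⟨M, hM, hM0⟩ := hball (max R (max R₁ (-(-(c + 1) * γ 0 - K))))
    have hMpos : 0 < M := lt_of_lt_of_le (hγpos 0) hM0
    refine ⟨min 1 (ε / M), lt_min one_pos (div_pos hε hMpos), ?_⟩
    intro φ hφ hclose
    set δ : ℝ := min 1 (ε / M) with hδdef
    have hδpos : 0 < δ := lt_min one_pos (div_pos hε hMpos)
    have hδ1 : δ ≤ 1 := min_le_left _ _
    have hφbd : ∀ q : EuclideanSpace ℝ (Fin n) × Ω, |φ q| ≤ (c + 1) * γ q.1 := by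
      intro q
      have h1 := hc q
      have h2 := hclose q
      have h3 := (hγpos q.1).le
      have h4 : |φ q| ≤ |φ₀ q| + |φ q - φ₀ q| := by
        calc |φ q| = |φ₀ q + (φ q - φ₀ q)| := by ring_nf
        _ ≤ |φ₀ q| + |φ q - φ₀ q| := abs_add_le _ _
      nlinarith
    have hφ₀bd : ∀ q : EuclideanSpace ℝ (Fin n) × Ω, |φ₀ q| ≤ (c + 1) * γ q.1 := by
      intro q
      have h1 := hc q
      have h2 := (hγpos q.1).le
      nlinarith
    have main : ∀ ψ₁ ψ₂ : EuclideanSpace ℝ (Fin n) × Ω → ℝ,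
        (∀ q : EuclideanSpace ℝ (Fin n) × Ω, |ψ₁ q| ≤ (c + 1) * γ q.1) →
        (∀ q : EuclideanSpace ℝ (Fin n) × Ω, |ψ₂ q| ≤ (c + 1) * γ q.1) →
        (∀ q : EuclideanSpace ℝ (Fin n) × Ω, |ψ₁ q - ψ₂ q| ≤ δ * γ q.1) →
        sSup (Set.range fun q : EuclideanSpace ℝ (Fin n) × Ω => -ψ₁ q - L q.1 q.2)
          ≤ sSup (Set.range fun q : EuclideanSpace ℝ (Fin n) × Ω => -ψ₂ q - L q.1 q.2) + ε := by
      intro ψ₁ ψ₂ hψ₁ hψ₂ hd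
      have bdd₂ := key ψ₂ (c + 1) hψ₂
      have hBS : -(c + 1) * γ 0 - K ≤
          sSup (Set.range fun q : EuclideanSpace ℝ (Fin n) × Ω => -ψ₂ q - L q.1 q.2) := by
        have h1 : -ψ₂ (0, ω₀) - L 0 ω₀ ≤ sSup (Set.range fun q :
            EuclideanSpace ℝ (Fin n) × Ω => -ψ₂ q - L q.1 q.2) :=
          le_csSup bdd₂ ⟨(0, ω₀), rfl⟩
        have h2 : |ψ₂ (0, ω₀)| ≤ (c + 1) * γ 0 := hψ₂ (0, ω₀)
        have h3 := hK ω₀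
        have h4 := (abs_le.1 h2).2
        linarith
      refine csSup_le (hne _) ?_
      rintro x ⟨q, rfl⟩
      show -ψ₁ q - L q.1 q.2 ≤ _
      rcases le_or_gt ‖q.1‖ (max R (max R₁ (-(-(c + 1) * γ 0 - K)))) with hv | hv
      · have h1 : -ψ₂ q - L q.1 q.2 ≤ sSup (Set.range fun q :
            EuclideanSpace ℝ (Fin n) × Ω => -ψ₂ q - L q.1 q.2) :=
          le_csSup bdd₂ ⟨q, rfl⟩
        have h2 := (abs_le.1 (hd q)).1
        have h3 := hM q.1 hv
        have hδM : δ * γ q.1 ≤ ε := by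
          have e1 : δ * γ q.1 ≤ δ * M := by nlinarith [hγpos q.1]
          have e2 : δ * M ≤ (ε / M) * M :=
            mul_le_mul_of_nonneg_right (min_le_right _ _) hMpos.le
          have e3 : (ε / M) * M = ε := div_mul_cancel₀ ε hMpos.ne'
          linarith
        linarith
      · have hvR : R ≤ ‖q.1‖ := (le_max_left _ _).trans hv.le
        have hvR₁ : R₁ ≤ ‖q.1‖ := ((le_max_left _ _).trans (le_max_right R _)).trans hv.le
        have hvB : -(-(c + 1) * γ 0 - K) ≤ ‖q.1‖ :=
          ((le_max_right _ _).trans (le_max_right R _)).trans hv.le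
        have hL := hR q.1 q.2 hvR
        have hg := hR₁ q.1 hvR₁
        have h1 := (abs_le.1 (hψ₁ q)).1
        linarith
    have d1 := main φ φ₀ hφbd hφ₀bd hclose
    have d2 := main φ₀ φ hφ₀bd hφbd (fun q => by
      rw [abs_sub_comm]; exact hclose q)
    rw [hh φ, hh φ₀, abs_le]
    constructor <;> linarith
end

section
/- With h(φ) = sup_{(v,ω)} (−φ(v, ω) − L(0, v, ω)) on C⁰_γ(ℝⁿ × Ω), the Legendre–Fenchel transform h*(μ) = sup_{φ ∈ C⁰_γ} (−∫ φ dμ − h(φ)), taken over the dual space M of weighted Radon measures with ∫ γ d|μ| < ∞, satisfies: h*(μ) = ∫ L(0, v, ω) dμ if μ is a positive probability measure, and h*(μ) = +∞ otherwise. -/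
open MeasureTheory

/-- The Legendre–Fenchel transform of
`h(φ) = sup_{(v,ω)} (−φ(v,ω) − L(0,v,ω))` on `C⁰_γ`, over the weighted Radon
measures `μ` with `∫ γ d|μ| < ∞`, equals `∫ L dμ` when `μ` is a positive
probability measure (the set `{−∫φ dμ − h(φ)}` has `∫ L dμ` as least upper
bound) and `+∞` otherwise (that set is unbounded above). -/
theorem stmt_11 {n : ℕ} {Ω : Type*} [MetricSpace Ω] [CompactSpace Ω] [Nonempty Ω]
    [MeasurableSpace Ω] [BorelSpace Ω]
    (γ : EuclideanSpace ℝ (Fin n) → ℝ) (hγpos : ∀ v, 0 < γ v)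
    (hγcont : Continuous γ)
    (hγgrowth : ∀ ε > (0:ℝ), ∃ R : ℝ, ∀ v : EuclideanSpace ℝ (Fin n),
      R ≤ ‖v‖ → ‖v‖ ≤ ε * γ v)
    (L : EuclideanSpace ℝ (Fin n) → Ω → ℝ)
    (hLcont : Continuous fun q : EuclideanSpace ℝ (Fin n) × Ω => L q.1 q.2)
    (hLnn : ∀ v ω, 0 ≤ L v ω)
    (hLgrowth : ∀ c : ℝ, ∃ R : ℝ, ∀ (v : EuclideanSpace ℝ (Fin n)) (ω : Ω),
      R ≤ ‖v‖ → c * γ v ≤ L v ω)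
    (Cγ : Set (EuclideanSpace ℝ (Fin n) × Ω → ℝ))
    (hCγ : ∀ φ, φ ∈ Cγ ↔ Continuous φ ∧
      (∃ c : ℝ, ∀ q : EuclideanSpace ℝ (Fin n) × Ω, |φ q| ≤ c * γ q.1) ∧
      (∀ ε > (0:ℝ), ∃ R : ℝ, ∀ q : EuclideanSpace ℝ (Fin n) × Ω,
        R ≤ ‖q.1‖ → |φ q| ≤ ε * γ q.1))
    (h : (EuclideanSpace ℝ (Fin n) × Ω → ℝ) → ℝ)
    (hh : ∀ φ, h φ = sSup (Set.range fun q : EuclideanSpace ℝ (Fin n) × Ω =>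
      -φ q - L q.1 q.2))
    (μ : SignedMeasure (EuclideanSpace ℝ (Fin n) × Ω))
    (hμγ : ∫⁻ q, ENNReal.ofReal (γ q.1) ∂μ.totalVariation < ⊤)
    (I : (EuclideanSpace ℝ (Fin n) × Ω → ℝ) → ℝ)
    (hI : ∀ φ, I φ = ∫ q, φ q ∂μ.toJordanDecomposition.posPart -
      ∫ q, φ q ∂μ.toJordanDecomposition.negPart)
    (S : Set ℝ) (hS : S = {r : ℝ | ∃ φ ∈ Cγ, r = -I φ - h φ}) :
    ((0 ≤ μ ∧ μ Set.univ = 1 ∧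
        Integrable (fun q => L q.1 q.2) μ.toJordanDecomposition.posPart) →
      IsLUB S (∫ q, L q.1 q.2 ∂μ.toJordanDecomposition.posPart)) ∧
    (¬ (0 ≤ μ ∧ μ Set.univ = 1 ∧
        Integrable (fun q => L q.1 q.2) μ.toJordanDecomposition.posPart) →
      ¬ BddAbove S) := by
  classical
  obtain ⟨q₀⟩ : Nonempty (EuclideanSpace ℝ (Fin n) × Ω) := inferInstance
  set μp := μ.toJordanDecomposition.posPart with hμpdef
  set μm := μ.toJordanDecomposition.negPart with hμmdef
  -- γ tends to infinity
  have hγtop : ∀ M : ℝ, ∃ R : ℝ, ∀ v : EuclideanSpace ℝ (Fin n), R ≤ ‖v‖ → M ≤ γ v := by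
    intro M
    obtain ⟨R, hR⟩ := hγgrowth 1 one_pos
    refine ⟨max R M, fun v hv => ?_⟩
    have h1 : ‖v‖ ≤ 1 * γ v := hR v (le_trans (le_max_left _ _) hv)
    have h2 : M ≤ ‖v‖ := le_trans (le_max_right _ _) hv
    linarith
  -- γ is bounded below by a positive constant
  have hγδ : ∃ δ : ℝ, 0 < δ ∧ ∀ v, δ ≤ γ v := by
    obtain ⟨R, hR⟩ := hγtop 1
    have hK : IsCompact (Metric.closedBall (0 : EuclideanSpace ℝ (Fin n)) (max R 0)) :=
      isCompact_closedBall _ _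
    have hne : (Metric.closedBall (0 : EuclideanSpace ℝ (Fin n)) (max R 0)).Nonempty :=
      ⟨0, Metric.mem_closedBall_self (le_max_right _ _)⟩
    obtain ⟨v₀, hv₀K, hv₀⟩ := hK.exists_isMinOn hne hγcont.continuousOn
    refine ⟨min (γ v₀) 1, lt_min (hγpos v₀) one_pos, fun v => ?_⟩
    by_cases hv : v ∈ Metric.closedBall (0 : EuclideanSpace ℝ (Fin n)) (max R 0)
    · exact le_trans (min_le_left _ _) (hv₀ hv)
    · have hbig : max R 0 < ‖v‖ := by
        simpa [Metric.mem_closedBall, dist_zero_right] using hv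
      exact le_trans (min_le_right _ _)
        (hR v ((le_max_left _ _).trans hbig.le))
  -- bounded continuous functions belong to Cγ
  have hbddCγ : ∀ (φ : EuclideanSpace ℝ (Fin n) × Ω → ℝ) (M : ℝ), Continuous φ →
      (∀ q, |φ q| ≤ M) → φ ∈ Cγ := by
    intro φ M hc hbd
    obtain ⟨δ, hδ, hδγ⟩ := hγδ
    have hM0 : 0 ≤ M := le_trans (abs_nonneg _) (hbd q₀)
    refine (hCγ φ).2 ⟨hc, ⟨M / δ, fun q => ?_⟩, fun ε hε => ?_⟩
    · calc |φ q| ≤ M := hbd q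
        _ = M / δ * δ := by field_simp
        _ ≤ M / δ * γ q.1 := mul_le_mul_of_nonneg_left (hδγ q.1) (div_nonneg hM0 hδ.le)
    · obtain ⟨R, hR⟩ := hγtop (M / ε)
      refine ⟨R, fun q hq => ?_⟩
      have h1 : M / ε ≤ γ q.1 := hR q.1 hq
      have h2 : M ≤ γ q.1 * ε := (div_le_iff₀ hε).mp h1
      calc |φ q| ≤ M := hbd q
        _ ≤ ε * γ q.1 := by linarith
  -- the signed measure applied to a set
  have happly : ∀ s : Set (EuclideanSpace ℝ (Fin n) × Ω), MeasurableSet s →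
      μ s = (μp s).toReal - (μm s).toReal := by
    intro s hs
    conv_lhs => rw [← μ.toSignedMeasure_toJordanDecomposition]
    exact Measure.toSignedMeasure_sub_apply hs
  -- finiteness of the γ-integrals
  have htv : μ.totalVariation = μp + μm := rfl
  rw [htv, lintegral_add_measure] at hμγ
  have hγint : ∀ ν : Measure (EuclideanSpace ℝ (Fin n) × Ω),
      (∫⁻ q, ENNReal.ofReal (γ q.1) ∂ν < ⊤) → Integrable (fun q => γ q.1) ν := fun ν hν =>
    ⟨(hγcont.comp continuous_fst).aestronglyMeasurable,
      (hasFiniteIntegral_iff_ofReal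
        (Filter.Eventually.of_forall fun (q : EuclideanSpace ℝ (Fin n) × Ω) => (hγpos q.1).le)).mpr hν⟩
  have hγintp : Integrable (fun q => γ q.1) μp :=
    hγint μp (lt_of_le_of_lt le_self_add hμγ)
  have hγintm : Integrable (fun q => γ q.1) μm :=
    hγint μm (lt_of_le_of_lt le_add_self hμγ)
  -- integrability of elements of Cγ
  have hCint : ∀ φ ∈ Cγ, Integrable φ μp ∧ Integrable φ μm := by
    intro φ hφ
    obtain ⟨hc, ⟨c, hcb⟩, -⟩ := (hCγ φ).1 hφ
    constructor
    · exact Integrable.mono' (hγintp.const_mul c) hc.aestronglyMeasurable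
        (Filter.Eventually.of_forall fun q => by
          simpa [Real.norm_eq_abs] using hcb q)
    · exact Integrable.mono' (hγintm.const_mul c) hc.aestronglyMeasurable
        (Filter.Eventually.of_forall fun q => by
          simpa [Real.norm_eq_abs] using hcb q)
  have hIeq : μm = 0 → ∀ φ, I φ = ∫ q, φ q ∂μp := by
    intro hm0 φ
    rw [hI, hμmdef] at *
    rw [hm0, integral_zero_measure, sub_zero]
  -- membership of truncation values in S
  have hSmem : μm = 0 → ∀ N : ℝ, L q₀.1 q₀.2 ≤ N →
      (∫ q, min (L q.1 q.2) N ∂μp) ∈ S := by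
    intro hm0 N hN
    have hNnn : 0 ≤ N := le_trans (hLnn _ _) hN
    have hφC : (fun q : EuclideanSpace ℝ (Fin n) × Ω => -min (L q.1 q.2) N) ∈ Cγ := by
      apply hbddCγ _ N (hLcont.min continuous_const).neg
      intro q
      show |-min (L q.1 q.2) N| ≤ N
      rw [abs_neg, abs_of_nonneg (le_min (hLnn _ _) hNnn)]
      exact min_le_right _ _
    have hh0 : h (fun q : EuclideanSpace ℝ (Fin n) × Ω => -min (L q.1 q.2) N) = 0 := by
      rw [hh]
      apply IsGreatest.csSup_eq
      constructor
      · exact ⟨q₀, by simp [min_eq_left hN]⟩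
      · rintro x ⟨q, rfl⟩
        have h1 := min_le_left (L q.1 q.2) N
        simp only [neg_neg]
        linarith
    rw [hS]
    refine ⟨_, hφC, ?_⟩
    rw [hIeq hm0, hh0, integral_neg]
    ring
  -- if μ is nonnegative then the negative part vanishes
  have hneg0 : 0 ≤ μ → μm = 0 := by
    intro hμ0
    obtain ⟨B, hBm, hB1, hB2⟩ := μ.toJordanDecomposition.mutuallySingular
    have h1 : (0 : ℝ) ≤ μ B := by
      have := (VectorMeasure.le_iff.mp hμ0) B hBm
      simpa using this
    have h2 := happly B hBm
    rw [show μ.toJordanDecomposition.posPart B = μp B from rfl] at hB1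
    rw [hB1] at h2
    simp only [ENNReal.toReal_zero, zero_sub] at h2
    have h3 : (μm B).toReal = 0 := le_antisymm (by linarith) ENNReal.toReal_nonneg
    have h4 : μm B = 0 := by
      have hne := measure_ne_top μm B
      exact (ENNReal.toReal_eq_zero_iff _).mp h3 |>.resolve_right hne
    have h5 : μm Set.univ = 0 := by
      rw [← measure_add_measure_compl hBm, h4,
        show μ.toJordanDecomposition.negPart Bᶜ = μm Bᶜ from rfl] at *
      rw [hB2, add_zero]
    exact Measure.measure_univ_eq_zero.mp h5
  -- probability of the positive part
  have hprob : 0 ≤ μ → μ Set.univ = 1 → μp Set.univ = 1 := by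
    intro h0 h1
    have h2 := happly Set.univ MeasurableSet.univ
    rw [hneg0 h0] at h2
    simp only [Measure.coe_zero, Pi.zero_apply, ENNReal.toReal_zero, sub_zero] at h2
    rw [h1] at h2
    exact (ENNReal.toReal_eq_one_iff _).mp h2.symm
  -- ranges are bounded above
  have hbddT : ∀ φ ∈ Cγ, BddAbove (Set.range fun q : EuclideanSpace ℝ (Fin n) × Ω =>
      -φ q - L q.1 q.2) := by
    intro φ hφ
    obtain ⟨hc, -, hdecay⟩ := (hCγ φ).1 hφ
    obtain ⟨R₁, hR₁⟩ := hdecay 1 one_pos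
    obtain ⟨R₂, hR₂⟩ := hLgrowth 1
    have hKc : IsCompact ((Metric.closedBall (0 : EuclideanSpace ℝ (Fin n))
        (max (max R₁ R₂) 0)) ×ˢ (Set.univ : Set Ω)) :=
      (isCompact_closedBall _ _).prod isCompact_univ
    have hKne : ((Metric.closedBall (0 : EuclideanSpace ℝ (Fin n))
        (max (max R₁ R₂) 0)) ×ˢ (Set.univ : Set Ω)).Nonempty :=
      ⟨(0, q₀.2), by
        constructor
        · exact Metric.mem_closedBall_self (le_max_right _ _)
        · trivial⟩
    obtain ⟨z, hzK, hz⟩ := hKc.exists_isMaxOn hKne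
      (Continuous.continuousOn (by fun_prop : Continuous
        (fun q : EuclideanSpace ℝ (Fin n) × Ω => -φ q - L q.1 q.2)))
    refine ⟨max (-φ z - L z.1 z.2) 0, ?_⟩
    rintro x ⟨q, rfl⟩
    by_cases hq : q ∈ (Metric.closedBall (0 : EuclideanSpace ℝ (Fin n))
        (max (max R₁ R₂) 0)) ×ˢ (Set.univ : Set Ω)
    · exact le_trans (hz hq) (le_max_left _ _)
    · have hqn : max (max R₁ R₂) 0 ≤ ‖q.1‖ := by
        by_contra hcon
        push_neg at hcon
        refine hq ⟨?_, trivial⟩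
        simpa [Metric.mem_closedBall, dist_zero_right] using hcon.le
      have h1 : |φ q| ≤ 1 * γ q.1 :=
        hR₁ q (le_trans (le_trans (le_max_left _ _) (le_max_left _ _)) hqn)
      have h2 : 1 * γ q.1 ≤ L q.1 q.2 :=
        hR₂ q.1 q.2 (le_trans (le_trans (le_max_right _ _) (le_max_left _ _)) hqn)
      have h3 := (abs_le.mp h1).1
      have h4 : -φ q - L q.1 q.2 ≤ 0 := by linarith
      exact le_trans h4 (le_max_right _ _)
  constructor
  · -- part 1: μ is a positive probability measure with integrable L
    rintro ⟨h0, h1, hint⟩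
    have hm0 := hneg0 h0
    have hp1 := hprob h0 h1
    haveI : IsProbabilityMeasure μp := ⟨hp1⟩
    constructor
    · -- upper bound
      rintro r hr
      rw [hS] at hr
      obtain ⟨φ, hφ, rfl⟩ := hr
      obtain ⟨hφint, -⟩ := hCint φ hφ
      have hkey : ∀ q : EuclideanSpace ℝ (Fin n) × Ω, -h φ ≤ φ q + L q.1 q.2 := by
        intro q
        have hle : -φ q - L q.1 q.2 ≤ h φ := by
          rw [hh]; exact le_csSup (hbddT φ hφ) ⟨q, rfl⟩
        linarith
      have hmono : -h φ ≤ ∫ q, (φ q + L q.1 q.2) ∂μp := by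
        have hci : Integrable (fun _ : EuclideanSpace ℝ (Fin n) × Ω => -h φ) μp :=
          integrable_const _
        have h5 := integral_mono hci (hφint.add hint) (fun q => hkey q)
        simpa using h5
      rw [integral_add hφint hint] at hmono
      rw [hIeq hm0]
      linarith
    · -- least upper bound
      intro b hb
      have hble : ∀ k : ℕ, (∫ q, min (L q.1 q.2) (L q₀.1 q₀.2 + k) ∂μp) ≤ b := fun k =>
        hb (hSmem hm0 (L q₀.1 q₀.2 + k) (by
          have := Nat.cast_nonneg (α := ℝ) k
          linarith))
      have htend : Filter.Tendsto
          (fun k : ℕ => ∫ q, min (L q.1 q.2) (L q₀.1 q₀.2 + k) ∂μp)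
          Filter.atTop (nhds (∫ q, L q.1 q.2 ∂μp)) := by
        apply tendsto_integral_of_dominated_convergence (fun q => L q.1 q.2)
          (fun k => (hLcont.min continuous_const).aestronglyMeasurable) hint
        · intro k
          apply Filter.Eventually.of_forall; intro q
          rw [Real.norm_eq_abs, abs_of_nonneg (le_min (hLnn _ _)
            (by have := hLnn q₀.1 q₀.2; have := Nat.cast_nonneg (α := ℝ) k; linarith))]
          exact min_le_left _ _
        · apply Filter.Eventually.of_forall; intro q
          have hev : (fun _ : ℕ => L q.1 q.2) =ᶠ[Filter.atTop]
              (fun k : ℕ => min (L q.1 q.2) (L q₀.1 q₀.2 + k)) := by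
            filter_upwards [Filter.eventually_ge_atTop ⌈L q.1 q.2⌉₊] with k hk
            rw [min_eq_left]
            have h6 : L q.1 q.2 ≤ (⌈L q.1 q.2⌉₊ : ℝ) := Nat.le_ceil _
            have h7 : ((⌈L q.1 q.2⌉₊ : ℕ) : ℝ) ≤ (k : ℝ) := Nat.cast_le.mpr hk
            have h8 := hLnn q₀.1 q₀.2
            linarith
          exact Filter.Tendsto.congr' hev tendsto_const_nhds
      exact le_of_tendsto htend (Filter.Eventually.of_forall hble)
  · -- part 2
    intro hn hbdd
    obtain ⟨b, hb⟩ := hbdd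
    have hb' : ∀ φ ∈ Cγ, -I φ - h φ ≤ b := fun φ hφ => hb (by rw [hS]; exact ⟨φ, hφ, rfl⟩)
    -- Step 1 : 0 ≤ μ
    have hdual : ∀ (ψ : EuclideanSpace ℝ (Fin n) × Ω → ℝ) (M : ℝ), Continuous ψ →
        (∀ q, 0 ≤ ψ q) → (∀ q, ψ q ≤ M) → ∫ q, ψ q ∂μm ≤ ∫ q, ψ q ∂μp := by
      intro ψ M hc hnn hub
      have hψS : ∀ t : ℝ, 0 ≤ t → t * (∫ q, ψ q ∂μm - ∫ q, ψ q ∂μp) ≤ b := by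
        intro t ht
        have hmem : (fun q => t * ψ q) ∈ Cγ := by
          apply hbddCγ _ (t * M) (continuous_const.mul hc)
          intro q
          show |t * ψ q| ≤ t * M
          rw [abs_of_nonneg (mul_nonneg ht (hnn q))]
          exact mul_le_mul_of_nonneg_left (hub q) ht
        have h1 := hb' _ hmem
        have hh0 : h (fun q => t * ψ q) ≤ 0 := by
          rw [hh]
          apply Real.sSup_le _ le_rfl
          rintro x ⟨q, rfl⟩
          have h2 := mul_nonneg ht (hnn q)
          have h3 := hLnn q.1 q.2
          show -(t * ψ q) - L q.1 q.2 ≤ 0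
          linarith
        have hI1 : I (fun q => t * ψ q) =
            t * (∫ q, ψ q ∂μp - ∫ q, ψ q ∂μm) := by
          rw [hI, integral_const_mul, integral_const_mul]
          ring
        rw [hI1] at h1
        nlinarith [h1, hh0]
      by_contra hcon
      push_neg at hcon
      set d := ∫ q, ψ q ∂μm - ∫ q, ψ q ∂μp with hd
      have hd0 : 0 < d := by simp only [hd]; linarith
      have h4 := hψS ((|b| + 1) / d) (div_nonneg (by positivity) hd0.le)
      rw [div_mul_cancel₀ _ hd0.ne'] at h4
      have h5 := le_abs_self b
      linarith
    have hlint : ∀ f : BoundedContinuousFunction (EuclideanSpace ℝ (Fin n) × Ω) NNReal,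
        ∫⁻ q, (f q : ENNReal) ∂μm ≤ ∫⁻ q, (f q : ENNReal) ∂μp := by
      intro f
      have hcont : Continuous fun q => (f q : ℝ) := NNReal.continuous_coe.comp f.continuous
      obtain ⟨C, hC⟩ := f.bounded
      have hub : ∀ q, (f q : ℝ) ≤ (f q₀ : ℝ) + C := fun q => by
        have h6 := hC q q₀
        rw [NNReal.dist_eq] at h6
        have := abs_le.mp h6
        linarith [this.1]
      have hnn : ∀ q, (0:ℝ) ≤ (f q : ℝ) := fun q => (f q).2
      have key := hdual _ ((f q₀ : ℝ) + C) hcont hnn hub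
      have hip : Integrable (fun q => (f q : ℝ)) μp := by
        apply Integrable.mono' (integrable_const ((f q₀ : ℝ) + C)) hcont.aestronglyMeasurable
        exact Filter.Eventually.of_forall fun q => by
          rw [Real.norm_eq_abs, abs_of_nonneg (hnn q)]; exact hub q
      have him : Integrable (fun q => (f q : ℝ)) μm := by
        apply Integrable.mono' (integrable_const ((f q₀ : ℝ) + C)) hcont.aestronglyMeasurable
        exact Filter.Eventually.of_forall fun q => by
          rw [Real.norm_eq_abs, abs_of_nonneg (hnn q)]; exact hub q
      calc ∫⁻ q, (f q : ENNReal) ∂μm = ENNReal.ofReal (∫ q, (f q : ℝ) ∂μm) :=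
            lintegral_coe_eq_integral _ him
        _ ≤ ENNReal.ofReal (∫ q, (f q : ℝ) ∂μp) := ENNReal.ofReal_le_ofReal key
        _ = ∫⁻ q, (f q : ENNReal) ∂μp := (lintegral_coe_eq_integral _ hip).symm
    have hclosed : ∀ F : Set (EuclideanSpace ℝ (Fin n) × Ω), IsClosed F → μm F ≤ μp F := by
      intro F hF
      exact le_of_tendsto_of_tendsto'
        (HasOuterApproxClosed.tendsto_lintegral_apprSeq hF μm)
        (HasOuterApproxClosed.tendsto_lintegral_apprSeq hF μp)
        (fun k => hlint _)
    have hle : ∀ s : Set (EuclideanSpace ℝ (Fin n) × Ω), MeasurableSet s → μm s ≤ μp s := by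
      intro s hs
      refine ENNReal.le_of_forall_pos_le_add fun ε hε _ => ?_
      obtain ⟨F, hFs, hFc, hFlt⟩ := hs.exists_isClosed_lt_add (μ := μm)
        (measure_ne_top μm s) (ε := (ε : ENNReal)) (by exact_mod_cast hε.ne')
      calc μm s ≤ μm F + ε := hFlt.le
        _ ≤ μp F + ε := add_le_add_left (hclosed F hFc) _
        _ ≤ μp s + ε := add_le_add_left (measure_mono hFs) _
    have hm0 : μm = 0 := by
      obtain ⟨B, hBm, hB1, hB2⟩ := μ.toJordanDecomposition.mutuallySingular
      have h4 : μm B = 0 := le_antisymm ((hle B hBm).trans_eq hB1) zero_le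
      have h5 : μm Set.univ = 0 := by
        rw [← measure_add_measure_compl hBm, h4,
          show μ.toJordanDecomposition.negPart Bᶜ = μm Bᶜ from rfl] at *
        rw [hB2, add_zero]
      exact Measure.measure_univ_eq_zero.mp h5
    have h0 : 0 ≤ μ := by
      rw [VectorMeasure.le_iff]
      intro s hs
      have h7 := happly s hs
      rw [hm0] at h7
      simp only [Measure.coe_zero, Pi.zero_apply, ENNReal.toReal_zero, sub_zero] at h7
      rw [VectorMeasure.zero_apply, h7]
      exact ENNReal.toReal_nonneg
    -- Step 2 : μ is a probability measure
    have hbddL : BddAbove (Set.range fun q : EuclideanSpace ℝ (Fin n) × Ω =>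
        -L q.1 q.2) := ⟨0, by rintro x ⟨q, rfl⟩; simpa using hLnn q.1 q.2⟩
    set m := sSup (Set.range fun q : EuclideanSpace ℝ (Fin n) × Ω => -L q.1 q.2) with hm
    have hconst : ∀ k : ℝ, h (fun _ => k) = -k + m := by
      intro k
      rw [hh]
      refine IsLUB.csSup_eq ⟨?_, ?_⟩ ⟨_, ⟨q₀, rfl⟩⟩
      · rintro x ⟨q, rfl⟩
        have h8 : -L q.1 q.2 ≤ m := le_csSup hbddL ⟨q, rfl⟩
        show -k - L q.1 q.2 ≤ -k + m
        linarith
      · intro ub hub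
        have h9 : m ≤ ub + k := by
          refine csSup_le ⟨_, ⟨q₀, rfl⟩⟩ ?_
          rintro x ⟨q, rfl⟩
          have := hub ⟨q, rfl⟩
          show -L q.1 q.2 ≤ ub + k
          have h10 : -k - L q.1 q.2 ≤ ub := this
          linarith
        linarith
    set t := (μp Set.univ).toReal with htdef
    have hconstle : ∀ k : ℝ, k * (1 - t) - m ≤ b := by
      intro k
      have hmem : (fun _ : EuclideanSpace ℝ (Fin n) × Ω => k) ∈ Cγ :=
        hbddCγ _ |k| continuous_const (fun q => le_rfl)
      have h11 := hb' _ hmem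
      rw [hconst k, hIeq hm0] at h11
      rw [integral_const, smul_eq_mul, show μp.real Set.univ = t from rfl] at h11
      linarith [h11]
    have ht1 : t = 1 := by
      by_contra hne
      have h12 := hconstle ((b + m + 1) / (1 - t))
      rw [div_mul_cancel₀ _ (sub_ne_zero.mpr (Ne.symm hne))] at h12
      linarith
    have huniv : μ Set.univ = 1 := by
      have h13 := happly Set.univ MeasurableSet.univ
      rw [hm0] at h13
      simp only [Measure.coe_zero, Pi.zero_apply, ENNReal.toReal_zero, sub_zero] at h13
      rw [h13]; exact ht1
    -- Step 3 : integrability of L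
    have hintL : Integrable (fun q : EuclideanSpace ℝ (Fin n) × Ω => L q.1 q.2) μp := by
      have hblt : ∀ k : ℕ, ∫ q, min (L q.1 q.2) (L q₀.1 q₀.2 + k) ∂μp ≤ b := fun k =>
        hb (hSmem hm0 (L q₀.1 q₀.2 + k) (by
          have := Nat.cast_nonneg (α := ℝ) k; linarith))
      have hca : ∀ k : ℕ, ∫⁻ q, ENNReal.ofReal (min (L q.1 q.2) (L q₀.1 q₀.2 + k)) ∂μp
          = ENNReal.ofReal (∫ q, min (L q.1 q.2) (L q₀.1 q₀.2 + k) ∂μp) := by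
        intro k
        refine (ofReal_integral_eq_lintegral_ofReal ?_ ?_).symm
        · apply Integrable.mono' (integrable_const (L q₀.1 q₀.2 + (k:ℝ)))
            (hLcont.min continuous_const).aestronglyMeasurable
          refine Filter.Eventually.of_forall fun q => ?_
          rw [Real.norm_eq_abs, abs_of_nonneg (le_min (hLnn _ _)
            (by have := hLnn q₀.1 q₀.2; have := Nat.cast_nonneg (α := ℝ) k; linarith))]
          exact min_le_right _ _
        · refine Filter.Eventually.of_forall fun q => ?_
          show (0:ℝ) ≤ min (L q.1 q.2) (L q₀.1 q₀.2 + (k:ℝ))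
          exact le_min (hLnn _ _)
            (by have := hLnn q₀.1 q₀.2; have := Nat.cast_nonneg (α := ℝ) k; linarith)
      have hptsup : ∀ q : EuclideanSpace ℝ (Fin n) × Ω,
          (⨆ k : ℕ, ENNReal.ofReal (min (L q.1 q.2) (L q₀.1 q₀.2 + k)))
            = ENNReal.ofReal (L q.1 q.2) := by
        intro q
        apply le_antisymm
        · exact iSup_le fun k => ENNReal.ofReal_le_ofReal (min_le_left _ _)
        · refine le_iSup_of_le ⌈L q.1 q.2⌉₊ (le_of_eq ?_)
          rw [min_eq_left]
          have h6 : L q.1 q.2 ≤ (⌈L q.1 q.2⌉₊ : ℝ) := Nat.le_ceil _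
          have h8 := hLnn q₀.1 q₀.2
          linarith
      have hsup : ∫⁻ q, ENNReal.ofReal (L q.1 q.2) ∂μp =
          ⨆ k : ℕ, ∫⁻ q, ENNReal.ofReal (min (L q.1 q.2) (L q₀.1 q₀.2 + k)) ∂μp := by
        rw [← lintegral_iSup]
        · apply lintegral_congr
          intro q
          exact (hptsup q).symm
        · exact fun k => ((hLcont.min continuous_const).measurable).ennreal_ofReal
        · intro i j hij q
          apply ENNReal.ofReal_le_ofReal
          refine min_le_min le_rfl ?_
          have h14 : (i : ℝ) ≤ (j : ℝ) := Nat.cast_le.mpr hij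
          linarith
      have hfin : ∫⁻ q, ENNReal.ofReal (L q.1 q.2) ∂μp ≤ ENNReal.ofReal b := by
        rw [hsup]
        refine iSup_le fun k => ?_
        rw [hca k]
        exact ENNReal.ofReal_le_ofReal (hblt k)
      exact ⟨hLcont.aestronglyMeasurable, (hasFiniteIntegral_iff_ofReal
        (Filter.Eventually.of_forall fun (q : EuclideanSpace ℝ (Fin n) × Ω) =>
          hLnn q.1 q.2)).mpr (lt_of_le_of_lt hfin ENNReal.ofReal_lt_top)⟩
    exact hn ⟨h0, huniv, hintL⟩
end

section
/- Let μ_α be a discounted holonomic stationary Mather measure constructed as a limit of occupation measures of minimizing trajectories x_n on [0, T_n] with T_n → ∞ and |ẋ_n| uniformly bounded. Then μ_α is invariant under the discounted Euler–Lagrange flow: for every bounded φ ∈ C¹_s(ℝⁿ × ℝⁿ × Ω) with bounded derivatives, ∫ W^{L_α}(0, v, ω) · ∇_{x,v} φ(0, v, ω) dμ_α(v, ω) = 0, where W^{L_α} = (v, (D²_{vv}L)^{-1}(D_x L + α D_v L − D²_{xv}L v)). The proof identity is: φ(x_n(T_n), ẋ_n(T_n), ω) − φ(x_n(0), ẋ_n(0),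 ω) = ∫₀^{T_n} (X^{L_α} ∂φ/∂x + Y^{L_α} ∂φ/∂v) dt along trajectories of the discounted Euler–Lagrange equation, and dividing by T_n gives 0 in the limit. -/
open Filter MeasureTheory

private lemma coord_le_norm {n : ℕ} (w : EuclideanSpace ℝ (Fin n)) (i : Fin n) :
    |w i| ≤ ‖w‖ := by
  rw [EuclideanSpace.norm_eq]
  rw [show |w i| = Real.sqrt (|w i|^2) by rw [Real.sqrt_sq_eq_abs, abs_abs]]
  apply Real.sqrt_le_sqrt
  have := Finset.single_le_sum (f := fun j => ‖w j‖^2) (fun j _ => by positivity)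
    (Finset.mem_univ i)
  simpa [Real.norm_eq_abs] using this


/-- A discounted holonomic stationary Mather measure, obtained as a limit of
occupation measures of minimizing trajectories of the discounted
Euler–Lagrange flow `(ẋ, ẍ) = W^{L_α}(x, ẋ, ω) = (v, Y(x, v, ω))`, is
invariant under that flow: for every bounded stationary `C¹` function `φ` with
bounded derivative, `∫ W^{L_α}(0,v,ω) · ∇_{x,v} φ(0,v,ω) dμ_α = 0`. -/
theorem stmt_16 {n : ℕ} {Ω : Type*} [MetricSpace Ω] [CompactSpace Ω]
    [MeasurableSpace Ω] [BorelSpace Ω]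
    (τ : EuclideanSpace ℝ (Fin n) → Ω → Ω)
    (hτcont : Continuous fun q : EuclideanSpace ℝ (Fin n) × Ω => τ q.1 q.2)
    (hadd : ∀ x y ω, τ (x + y) ω = τ x (τ y ω)) (hzero : ∀ ω, τ 0 ω = ω)
    -- the (discounted) Euler–Lagrange vector field W^{L_α} = (v, Y(x,v,ω))
    (Y : EuclideanSpace ℝ (Fin n) → EuclideanSpace ℝ (Fin n) → Ω →
      EuclideanSpace ℝ (Fin n))
    (hYcont : Continuous fun q : EuclideanSpace ℝ (Fin n) ×
      EuclideanSpace ℝ (Fin n) × Ω => Y q.1 q.2.1 q.2.2)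
    (hYstat : ∀ x y v ω, Y (x + y) v ω = Y x v (τ y ω))
    (ω₀ : Ω) (T : ℕ → ℝ) (hT : Tendsto T atTop atTop)
    (x v : ℕ → ℝ → EuclideanSpace ℝ (Fin n))
    -- minimizing trajectories solve the discounted Euler–Lagrange equations
    (hode₁ : ∀ m t, HasDerivAt (x m) (v m t) t)
    (hode₂ : ∀ m t, HasDerivAt (v m) (Y (x m t) (v m t) ω₀) t)
    (C : ℝ) (hvbd : ∀ m t, ‖v m t‖ ≤ C)
    (μα : Measure (EuclideanSpace ℝ (Fin n) × Ω)) [IsProbabilityMeasure μα]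
    (hconv : ∀ f : BoundedContinuousFunction (EuclideanSpace ℝ (Fin n) × Ω) ℝ,
      Tendsto (fun m => (T m)⁻¹ *
          ∫ t in Set.Ioc (0 : ℝ) (T m), f (v m t, τ (x m t) ω₀))
        atTop (nhds (∫ q, f q ∂μα))) :
    ∀ (φ : EuclideanSpace ℝ (Fin n) → EuclideanSpace ℝ (Fin n) → Ω → ℝ)
      (Dφ : EuclideanSpace ℝ (Fin n) → EuclideanSpace ℝ (Fin n) → Ω →
        (EuclideanSpace ℝ (Fin n) × EuclideanSpace ℝ (Fin n) →L[ℝ] ℝ)),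
      (∀ a y w ω, φ (a + y) w ω = φ a w (τ y ω)) →
      (∀ a w, Continuous (φ a w)) →
      (∀ a w ω, HasFDerivAt
        (fun q : EuclideanSpace ℝ (Fin n) × EuclideanSpace ℝ (Fin n) =>
          φ q.1 q.2 ω) (Dφ a w ω) (a, w)) →
      Continuous (fun q : EuclideanSpace ℝ (Fin n) ×
        EuclideanSpace ℝ (Fin n) × Ω => Dφ q.1 q.2.1 q.2.2) →
      (∃ B, ∀ a w ω, |φ a w ω| ≤ B) →
      (∃ B', ∀ a w ω, ‖Dφ a w ω‖ ≤ B') →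
      ∫ q, Dφ 0 q.1 q.2 (q.1, Y 0 q.1 q.2) ∂μα = 0 := by
  rintro φ Dφ hφstat hφcont hφderiv hDφcont ⟨B, hB⟩ ⟨B', hB'⟩
  -- translation identity for Y
  have hY0 : ∀ (a w : (EuclideanSpace ℝ (Fin n))) (ω : Ω), Y a w ω = Y 0 w (τ a ω) := by
    intro a w ω
    have := hYstat 0 a w ω
    simpa using this
  -- translation identity for Dφ
  have hDshift : ∀ (a w : (EuclideanSpace ℝ (Fin n))) (ω : Ω), Dφ 0 w (τ a ω) = Dφ a w ω := by
    intro a w ω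
    have hs : HasFDerivAt (fun q : (EuclideanSpace ℝ (Fin n)) × (EuclideanSpace ℝ (Fin n)) => q + (a, 0))
        (ContinuousLinearMap.id ℝ ((EuclideanSpace ℝ (Fin n)) × (EuclideanSpace ℝ (Fin n)))) (0, w) := (hasFDerivAt_id _).add_const _
    have ho : HasFDerivAt (fun q : (EuclideanSpace ℝ (Fin n)) × (EuclideanSpace ℝ (Fin n)) => φ q.1 q.2 ω) (Dφ a w ω)
        ((0, w) + (a, (0 : (EuclideanSpace ℝ (Fin n))))) := by
      have hementry : ((0 : (EuclideanSpace ℝ (Fin n))), w) + (a, (0 : (EuclideanSpace ℝ (Fin n)))) = (a, w) := by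
        simp [Prod.ext_iff]
      rw [hementry]; exact hφderiv a w ω
    have hc := ho.comp ((0 : (EuclideanSpace ℝ (Fin n))), w) hs
    have heq : ((fun q : (EuclideanSpace ℝ (Fin n)) × (EuclideanSpace ℝ (Fin n)) => φ q.1 q.2 ω) ∘
          fun q : (EuclideanSpace ℝ (Fin n)) × (EuclideanSpace ℝ (Fin n)) => q + (a, 0))
        = fun q : (EuclideanSpace ℝ (Fin n)) × (EuclideanSpace ℝ (Fin n)) => φ q.1 q.2 (τ a ω) := by
      funext q
      simp only [Function.comp]
      have := hφstat q.1 a q.2 ω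
      simpa using this
    rw [heq] at hc
    have := (hφderiv 0 w (τ a ω)).unique hc
    simpa using this
  -- the integrand
  set g : (EuclideanSpace ℝ (Fin n)) × Ω → ℝ := fun q => Dφ 0 q.1 q.2 (q.1, Y 0 q.1 q.2) with hg
  have hgcont : Continuous g := by
    have h1 : Continuous (fun q : (EuclideanSpace ℝ (Fin n)) × Ω => Dφ 0 q.1 q.2) :=
      hDφcont.comp (continuous_const.prodMk
        (continuous_fst.prodMk continuous_snd))
    have h2 : Continuous (fun q : (EuclideanSpace ℝ (Fin n)) × Ω => ((q.1, Y 0 q.1 q.2) : (EuclideanSpace ℝ (Fin n)) × (EuclideanSpace ℝ (Fin n)))) :=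
      continuous_fst.prodMk (hYcont.comp (continuous_const.prodMk
        (continuous_fst.prodMk continuous_snd)))
    exact h1.clm_apply h2
  -- derivative along trajectories
  have hxcont : ∀ m, Continuous (x m) := fun m =>
    continuous_iff_continuousAt.2 fun t => (hode₁ m t).continuousAt
  have hvcont : ∀ m, Continuous (v m) := fun m =>
    continuous_iff_continuousAt.2 fun t => (hode₂ m t).continuousAt
  have hderiv : ∀ m t, HasDerivAt (fun t => φ (x m t) (v m t) ω₀)
      (g (v m t, τ (x m t) ω₀)) t := by
    intro m t
    have hp : HasDerivAt (fun t => ((x m t, v m t) : (EuclideanSpace ℝ (Fin n)) × (EuclideanSpace ℝ (Fin n))))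
        (v m t, Y (x m t) (v m t) ω₀) t := (hode₁ m t).prodMk (hode₂ m t)
    have h := (hφderiv (x m t) (v m t) ω₀).comp_hasDerivAt t hp
    have : g (v m t, τ (x m t) ω₀)
        = Dφ (x m t) (v m t) ω₀ (v m t, Y (x m t) (v m t) ω₀) := by
      simp only [hg]
      rw [← hY0, hDshift]
    rw [this]
    exact h
  -- truncation
  set r : (EuclideanSpace ℝ (Fin n)) → (EuclideanSpace ℝ (Fin n)) := fun w =>
      (WithLp.equiv 2 (Fin n → ℝ)).symm (fun i => max (-C) (min C (w i))) with hr
  have hrcont : Continuous r := by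
    apply (PiLp.continuous_toLp 2 (fun _ : Fin n => ℝ)).comp
    exact continuous_pi fun i => continuous_const.max (continuous_const.min
      ((continuous_apply i).comp (PiLp.continuous_ofLp 2 (fun _ : Fin n => ℝ))))
  have hrfix : ∀ w : (EuclideanSpace ℝ (Fin n)), ‖w‖ ≤ C → r w = w := by
    intro w hw
    apply PiLp.ext; intro i
    have h1 : |w i| ≤ C := le_trans (coord_le_norm w i) hw
    have h2 : -C ≤ w i := (abs_le.1 h1).1
    have h3 : w i ≤ C := (abs_le.1 h1).2
    simp only [hr, WithLp.equiv_symm_apply, PiLp.toLp_apply]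
    rw [min_eq_right h3, max_eq_right h2]
  set K : Set (EuclideanSpace ℝ (Fin n)) := (WithLp.equiv 2 (Fin n → ℝ)).symm ''
      (Set.univ.pi fun _ : Fin n => Set.Icc (-C) C) with hK
  have hKcomp : IsCompact K :=
    (isCompact_univ_pi fun _ => isCompact_Icc).image
      (PiLp.continuous_toLp 2 (fun _ : Fin n => ℝ))
  have hrmem : ∀ w : (EuclideanSpace ℝ (Fin n)), r w ∈ K := by
    intro w
    exact ⟨fun i => max (-C) (min C (w i)),
      fun i _ => ⟨le_max_left _ _, max_le (by
        have : (0:ℝ) ≤ C := le_trans (norm_nonneg _) (hvbd 0 0)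
        linarith) (min_le_left _ _)⟩, rfl⟩
  -- bounded continuous version of g
  set f : (EuclideanSpace ℝ (Fin n)) × Ω → ℝ := fun q => g (r q.1, q.2) with hf
  have hfcont : Continuous f := hgcont.comp ((hrcont.comp continuous_fst).prodMk
    continuous_snd)
  obtain ⟨M, hM⟩ := (hKcomp.prod isCompact_univ).exists_bound_of_continuousOn
    hgcont.continuousOn
  have hfbd : ∀ q : (EuclideanSpace ℝ (Fin n)) × Ω, ‖f q‖ ≤ M := fun q =>
    hM (r q.1, q.2) ⟨hrmem q.1, Set.mem_univ _⟩
  set F : BoundedContinuousFunction ((EuclideanSpace ℝ (Fin n)) × Ω) ℝ :=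
    BoundedContinuousFunction.ofNormedAddCommGroup f hfcont M hfbd with hF
  -- the occupation averages of F tend to 0
  have hB0 : (0:ℝ) ≤ B := le_trans (abs_nonneg _) (hB 0 0 ω₀)
  have hocc0 : Tendsto (fun m => (T m)⁻¹ *
      ∫ t in Set.Ioc (0 : ℝ) (T m), F (v m t, τ (x m t) ω₀)) atTop (nhds 0) := by
    have hbnd : Tendsto (fun m => (T m)⁻¹ * (2 * B)) atTop (nhds 0) := by
      simpa using (tendsto_inv_atTop_zero.comp hT).mul_const (2 * B)
    apply squeeze_zero_norm' _ hbnd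
    filter_upwards [hT.eventually_ge_atTop 1] with m hm
    have hTpos : (0:ℝ) < T m := lt_of_lt_of_le one_pos hm
    have hFeq : ∀ t : ℝ, F (v m t, τ (x m t) ω₀) = g (v m t, τ (x m t) ω₀) := by
      intro t
      show f (v m t, τ (x m t) ω₀) = _
      simp only [hf]
      rw [hrfix _ (hvbd m t)]
    have hcont' : Continuous (fun t => g (v m t, τ (x m t) ω₀)) :=
      hgcont.comp ((hvcont m).prodMk (hτcont.comp ((hxcont m).prodMk
        continuous_const)))
    have hInt : ∫ t in Set.Ioc (0 : ℝ) (T m), F (v m t, τ (x m t) ω₀)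
        = φ (x m (T m)) (v m (T m)) ω₀ - φ (x m 0) (v m 0) ω₀ := by
      have h1 : ∫ t in Set.Ioc (0 : ℝ) (T m), F (v m t, τ (x m t) ω₀)
          = ∫ t in (0:ℝ)..(T m), g (v m t, τ (x m t) ω₀) := by
        rw [intervalIntegral.integral_of_le hTpos.le]
        exact setIntegral_congr_fun (by simp) fun t _ => hFeq t
      rw [h1]
      exact intervalIntegral.integral_eq_sub_of_hasDerivAt
        (fun t _ => hderiv m t) (hcont'.intervalIntegrable _ _)
    rw [hInt, norm_mul]
    have h2 : ‖φ (x m (T m)) (v m (T m)) ω₀ - φ (x m 0) (v m 0) ω₀‖ ≤ 2 * B := by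
      calc ‖φ (x m (T m)) (v m (T m)) ω₀ - φ (x m 0) (v m 0) ω₀‖
          ≤ |φ (x m (T m)) (v m (T m)) ω₀| + |φ (x m 0) (v m 0) ω₀| :=
            norm_sub_le _ _
        _ ≤ B + B := add_le_add (hB _ _ _) (hB _ _ _)
        _ = 2 * B := by ring
    have h3 : ‖(T m)⁻¹‖ = (T m)⁻¹ := by
      rw [Real.norm_eq_abs, abs_of_pos (inv_pos.2 hTpos)]
    rw [h3]
    exact mul_le_mul_of_nonneg_left h2 (inv_pos.2 hTpos).le
  have hFint : ∫ q, F q ∂μα = 0 := tendsto_nhds_unique (hconv F) hocc0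
  -- μα is supported where ‖q.1‖ ≤ C
  set f₀ : (EuclideanSpace ℝ (Fin n)) × Ω → ℝ := fun q => min (max (‖q.1‖ - C) 0) 1 with hf₀
  have hf₀cont : Continuous f₀ :=
    ((continuous_fst.norm.sub continuous_const).max continuous_const).min
      continuous_const
  have hf₀nonneg : ∀ q, 0 ≤ f₀ q := fun q => le_min (le_max_right _ _) zero_le_one
  have hf₀bd : ∀ q : (EuclideanSpace ℝ (Fin n)) × Ω, ‖f₀ q‖ ≤ 1 := by
    intro q
    rw [Real.norm_eq_abs, abs_of_nonneg (hf₀nonneg q)]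
    exact min_le_right _ _
  set F₀ : BoundedContinuousFunction ((EuclideanSpace ℝ (Fin n)) × Ω) ℝ :=
    BoundedContinuousFunction.ofNormedAddCommGroup f₀ hf₀cont 1 hf₀bd with hF₀
  have hF₀zero : ∫ q, F₀ q ∂μα = 0 := by
    refine tendsto_nhds_unique (hconv F₀) ?_
    have : (fun m => (T m)⁻¹ *
        ∫ t in Set.Ioc (0 : ℝ) (T m), F₀ (v m t, τ (x m t) ω₀)) = fun _ => 0 := by
      funext m
      have : ∀ t : ℝ, F₀ (v m t, τ (x m t) ω₀) = 0 := by
        intro t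
        show f₀ (v m t, τ (x m t) ω₀) = 0
        simp only [hf₀]
        rw [max_eq_right (by linarith [hvbd m t]), min_eq_left zero_le_one]
      simp [this]
    rw [this]
    exact tendsto_const_nhds
  have hae : ∀ᵐ q ∂μα, ‖q.1‖ ≤ C := by
    have hint : Integrable f₀ μα := F₀.integrable μα
    have h0 : f₀ =ᵐ[μα] 0 :=
      (integral_eq_zero_iff_of_nonneg hf₀nonneg hint).1 hF₀zero
    filter_upwards [h0] with q hq
    by_contra hc
    push_neg at hc
    have h1 : (0:ℝ) < ‖q.1‖ - C := by linarith
    have h2 : 0 < f₀ q := lt_min (lt_of_lt_of_le h1 (le_max_left _ _)) one_pos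
    rw [hq] at h2
    exact lt_irrefl _ h2
  -- conclude
  have : ∫ q, Dφ 0 q.1 q.2 (q.1, Y 0 q.1 q.2) ∂μα = ∫ q, F q ∂μα := by
    apply integral_congr_ae
    filter_upwards [hae] with q hq
    show g q = f q
    simp only [hf]
    rw [hrfix _ hq]
  rw [this, hFint]
end

section
/- Let u_α(x) be a family of semiconcave functions on ℝ (u_α(x) − (γ/2)x² concave for a fixed γ, uniformly in α) that are twice differentiable a.e., and let θ be a probability measure such that ∫ u_α'(u_α'')' dθ = 0 (holonomy) and the differentiated Hamilton–Jacobi identity u_x (u_{xx})_x + u_{xx}² + V''(x) + α u_{xx} = 0 holds θ-a.e., with |V''| ≤ c. Then ∫ u_{xx}² dθ ≤ ∫ (α² − 2V''(x)) dθ, using the inequality −α u_{xx} ≤ (1/2)u_{xx}² + (1/2)α². -/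
open MeasureTheory

/-- One-dimensional model estimate: if the twice-differentiated
Hamilton–Jacobi identity `u_x (u_{xx})_x + u_{xx}² + V'' + α u_{xx} = 0` holds
`θ`-a.e., `∫ u_x (u_{xx})_x dθ = 0` (holonomy), `u` is semiconcave and
`|V''| ≤ c`, then `∫ u_{xx}² dθ ≤ ∫ (α² − 2V'') dθ`. -/
theorem stmt_17 (α γ c : ℝ) (u V : ℝ → ℝ)
    (θ : Measure ℝ) [IsProbabilityMeasure θ]
    (hconc : ConcaveOn ℝ Set.univ fun x => u x - γ / 2 * x ^ 2)
    (hae : ∀ᵐ x ∂θ,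
      deriv u x * deriv^[3] u x + (deriv^[2] u x) ^ 2 + deriv^[2] V x +
        α * deriv^[2] u x = 0)
    (hVbd : ∀ x, |deriv^[2] V x| ≤ c)
    (hhol : ∫ x, deriv u x * deriv^[3] u x ∂θ = 0)
    (hint1 : Integrable (fun x => deriv u x * deriv^[3] u x) θ)
    (hint2 : Integrable (fun x => (deriv^[2] u x) ^ 2) θ)
    (hint3 : Integrable (fun x => deriv^[2] u x) θ)
    (hint4 : Integrable (fun x => deriv^[2] V x) θ) :
    ∫ x, (deriv^[2] u x) ^ 2 ∂θ ≤ ∫ x, (α ^ 2 - 2 * deriv^[2] V x) ∂θ := by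
  set A := ∫ x, (deriv^[2] u x) ^ 2 ∂θ with hA
  set B := ∫ x, deriv^[2] V x ∂θ with hB
  set C := ∫ x, deriv^[2] u x ∂θ with hC
  -- From the a.e. identity: u_xx² = -(u_x u_xxx) - V'' - α u_xx a.e.
  have key : A = -B - α * C := by
    have hcongr : A = ∫ x, (-(deriv u x * deriv^[3] u x) - deriv^[2] V x
        - α * deriv^[2] u x) ∂θ := by
      refine integral_congr_ae ?_
      filter_upwards [hae] with x hx
      linarith
    have h5 : Integrable (fun x => -(deriv u x * deriv^[3] u x) - deriv^[2] V x) θ :=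
      hint1.neg.sub hint4
    have h6 : Integrable (fun x => α * deriv^[2] u x) θ := hint3.const_mul α
    have h7 : Integrable (fun x => -(deriv u x * deriv^[3] u x)) θ := hint1.neg
    rw [hcongr, integral_sub h5 h6, integral_sub h7 hint4, integral_neg, hhol,
      integral_const_mul]
    ring
  -- Young: -α u_xx ≤ ½ u_xx² + ½ α² pointwise, integrated
  have young : -(α * C) ≤ A / 2 + α ^ 2 / 2 := by
    have h1 : ∫ x, (-(α * deriv^[2] u x)) ∂θ ≤
        ∫ x, ((deriv^[2] u x) ^ 2 / 2 + α ^ 2 / 2) ∂θ := by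
      refine integral_mono_ae ((hint3.const_mul α).neg) ((hint2.div_const 2).add
        (integrable_const _)) (Filter.Eventually.of_forall fun x => ?_)
      nlinarith [sq_nonneg (deriv^[2] u x + α)]
    rw [integral_neg, integral_const_mul] at h1
    rw [integral_add (hint2.div_const 2) (integrable_const _), integral_div,
      integral_const, probReal_univ, smul_eq_mul, one_mul] at h1
    linarith
  have hgoal : ∫ x, (α ^ 2 - 2 * deriv^[2] V x) ∂θ = α ^ 2 - 2 * B := by
    rw [integral_sub (integrable_const _) (hint4.const_mul 2), integral_const,
      probReal_univ, smul_eq_mul, one_mul, integral_const_mul]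
  rw [hgoal]
  linarith
end

section
/- In the one-dimensional model, let u be a solution of (1/2)u_x² + V(x) + α u = 0 and let μ_α be a discounted Mather measure whose trace equals its projection θ. If at a point (x, v) in the support of μ_α one had v ≠ −u_x(x) on a set of positive μ_α-measure, then ∫ L dμ_α > α ∫ u dθ_α, contradicting optimality (since the minimum of the discounted action equals α ∫ u dθ_α). Hence v = −u_x(x) for μ_α-almost every (x, v). The key pointwise inequality is L(x, v) + v·u_x(x) ≥ −H(u_x(x), x), with equality iff v = −D_pH(u_x, x) = −u_x. -/
open MeasureTheory

/-- In the one-dimensional model with `L(x,v) = v²/2 − V(x)` and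
`H(x,p) = p²/2 + V(x)`, if `u` solves `(1/2)u_x² + V + αu = 0`, `μ_α` is a
discounted Mather measure whose trace equals its projection `θ` (so it is
holonomic), and the discounted action of `μ_α` attains the optimal value
`α ∫ u dθ`, then `v = −u_x(x)` for `μ_α`-almost every `(x, v)`. -/
theorem stmt_18 (α : ℝ) (hα : 0 < α) (V u p : ℝ → ℝ)
    (hder : ∀ x, HasDerivAt u (p x) x)
    (hHJ : ∀ x, (p x) ^ 2 / 2 + V x + α * u x = 0)
    (μ : Measure (ℝ × ℝ)) [IsProbabilityMeasure μ]
    (θ : Measure ℝ) (hθ : θ = μ.map Prod.fst)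
    (hintL : Integrable (fun q => q.2 ^ 2 / 2 - V q.1) μ)
    (hintvp : Integrable (fun q => q.2 * p q.1) μ)
    (hintu : Integrable u θ)
    -- discounted holonomy constraint, applied with test function `u`
    (hhol : ∫ q, (q.2 * p q.1 - α * u q.1) ∂μ = -α * ∫ x, u x ∂θ)
    -- optimality: the discounted action equals `H̄_α = α ∫ u dθ`
    (hopt : ∫ q, (q.2 ^ 2 / 2 - V q.1) ∂μ = α * ∫ x, u x ∂θ) :
    ∀ᵐ q ∂μ, q.2 = -(p q.1) := by
  have hucont : Continuous u := continuous_iff_continuousAt.mpr fun x => (hder x).continuousAt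
  -- integrability of u ∘ fst
  have hintuf : Integrable (fun q : ℝ × ℝ => u q.1) μ := by
    rw [hθ] at hintu
    exact (integrable_map_measure hucont.aestronglyMeasurable measurable_fst.aemeasurable).mp
      hintu
  have hintuf' : Integrable (fun q : ℝ × ℝ => α * u q.1) μ := hintuf.const_mul α
  -- ∫ u ∘ fst dμ = ∫ u dθ
  have hmapeq : ∫ q : ℝ × ℝ, u q.1 ∂μ = ∫ x, u x ∂θ := by
    rw [hθ, integral_map measurable_fst.aemeasurable hucont.aestronglyMeasurable]
  -- the key nonnegative function
  set f : ℝ × ℝ → ℝ := fun q => (q.2 + p q.1) ^ 2 / 2 with hf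
  have hfeq : ∀ q : ℝ × ℝ,
      f q = (q.2 ^ 2 / 2 - V q.1) + q.2 * p q.1 - α * u q.1 := by
    intro q
    have h := hHJ q.1
    have : V q.1 = -(p q.1 ^ 2 / 2) - α * u q.1 := by linarith
    simp only [hf, this]; ring
  have hintf : Integrable f μ := by
    have : Integrable (fun q : ℝ × ℝ =>
        (q.2 ^ 2 / 2 - V q.1) + q.2 * p q.1 - α * u q.1) μ :=
      (hintL.add hintvp).sub hintuf'
    exact this.congr (Filter.Eventually.of_forall fun q => (hfeq q).symm)
  have hintvp' : ∫ q, q.2 * p q.1 ∂μ = 0 := by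
    have h1 : ∫ q, (q.2 * p q.1 - α * u q.1) ∂μ
        = ∫ q, q.2 * p q.1 ∂μ - ∫ q, α * u q.1 ∂μ := integral_sub hintvp hintuf'
    have h2 : ∫ q, α * u q.1 ∂μ = α * ∫ x, u x ∂θ := by
      rw [integral_const_mul, hmapeq]
    rw [h1, h2] at hhol
    linarith
  have hintfzero : ∫ q, f q ∂μ = 0 := by
    have : ∫ q, f q ∂μ = ∫ q, ((q.2 ^ 2 / 2 - V q.1) + q.2 * p q.1 - α * u q.1) ∂μ :=
      integral_congr_ae (Filter.Eventually.of_forall hfeq)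
    have h4 := integral_sub (hintL.add hintvp) hintuf'
    simp only [Pi.add_apply] at h4
    rw [this, h4, integral_add hintL hintvp,
      hopt, hintvp', integral_const_mul, hmapeq]
    ring
  have hae : f =ᵐ[μ] 0 := by
    have := (integral_eq_zero_iff_of_nonneg
      (fun q => by positivity) hintf).mp hintfzero
    exact this
  filter_upwards [hae] with q hq
  have : (q.2 + p q.1) ^ 2 / 2 = 0 := hq
  nlinarith [sq_nonneg (q.2 + p q.1)]
end

section
/- Let u : ℝⁿ → ℝ be semiconcave with constant C (i.e., u(z) ≤ u(y) + Du(y)·(z−y) + C|z−y|² whenever Du(y) exists), differentiable at 0, and satisfy the second-order Taylor-type estimates u(y) − u(0) − Du(0)·y ≤ C|y|² and u(−y) − u(0) + Du(0)·y ≤ C|y|², together with the two-sided bound |u(y) − 2u(0) + u(−y)| ≤ C|y|². Then for every y at which Du(y) exists, |Du(y) − Du(0)| ≤ C'|y| for a constant C' depending only on C. (The proof chooses z = y + |y|·(Du(0) − Du(y))/|Du(0) − Du(y)| in the semiconcavity inequality.) -/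
open scoped RealInnerProductSpace

/-- A semiconcave function satisfying the quadratic second-difference
estimates through the origin has a gradient which is Lipschitz at the origin:
`|Du(y) − Du(0)| ≤ C'|y|` at every point `y` of differentiability. -/
theorem stmt_19 {n : ℕ} (C : ℝ) (hC : 0 < C)
    (u : EuclideanSpace ℝ (Fin n) → ℝ)
    (g : EuclideanSpace ℝ (Fin n) → EuclideanSpace ℝ (Fin n))
    (S : Set (EuclideanSpace ℝ (Fin n)))  -- points where `Du = g` exists
    (h0 : (0 : EuclideanSpace ℝ (Fin n)) ∈ S)
    (hgrad : ∀ y ∈ S, HasGradientAt u (g y) y)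
    (hsc : ∀ y ∈ S, ∀ z, u z ≤ u y + ⟪g y, z - y⟫ + C * ‖z - y‖ ^ 2)
    (hup : ∀ y, u y - u 0 - ⟪g 0, y⟫ ≤ C * ‖y‖ ^ 2)
    (hup' : ∀ y, u (-y) - u 0 + ⟪g 0, y⟫ ≤ C * ‖y‖ ^ 2)
    (hsecond : ∀ y, |u y - 2 * u 0 + u (-y)| ≤ C * ‖y‖ ^ 2) :
    ∃ C' > (0:ℝ), ∀ y ∈ S, ‖g y - g 0‖ ≤ C' * ‖y‖ := by
  refine ⟨10 * C, by positivity, ?_⟩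
  intro y hy
  by_cases hgy : g y = g 0
  · simp only [hgy, sub_self, norm_zero]
    positivity
  have hy0 : y ≠ 0 := by
    rintro rfl; exact hgy rfl
  -- quadratic lower bound through the origin
  have hlow : ∀ z, u 0 + ⟪g 0, z⟫ - 2 * C * ‖z‖ ^ 2 ≤ u z := by
    intro z
    have h1 := (abs_le.mp (hsecond z)).1
    have h2 := hup' z
    linarith
  set d := g 0 - g y with hd
  have hdne : d ≠ 0 := sub_ne_zero.mpr (Ne.symm hgy)
  have hdpos : 0 < ‖d‖ := norm_pos_iff.mpr hdne
  have hypos : 0 < ‖y‖ := norm_pos_iff.mpr hy0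
  set t := ‖y‖ / ‖d‖ with ht
  have htpos : 0 < t := div_pos hypos hdpos
  set z := y + t • d with hz
  have hzy : z - y = t • d := by simp [hz]
  have htd : ‖t • d‖ = ‖y‖ := by
    rw [norm_smul, Real.norm_eq_abs, abs_of_pos htpos, ht]
    field_simp
  have hnz : ‖z - y‖ = ‖y‖ := by rw [hzy, htd]
  have h1 := hsc y hy z
  have h2 := hup y
  have h3 := hlow z
  have hinner : ⟪g 0, z⟫ = ⟪g 0, y⟫ + t * ⟪g 0, d⟫ := by
    rw [hz, inner_add_right, real_inner_smul_right]
  have hinner2 : ⟪g y, z - y⟫ = t * ⟪g y, d⟫ := by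
    rw [hzy, real_inner_smul_right]
  have hkey : t * ⟪g 0, d⟫ - t * ⟪g y, d⟫ = ‖y‖ * ‖d‖ := by
    have : ⟪g 0, d⟫ - ⟪g y, d⟫ = ⟪d, d⟫ := by
      rw [hd, inner_sub_left]
    have h4 : t * (⟪g 0, d⟫ - ⟪g y, d⟫) = t * (‖d‖ * ‖d‖) := by
      rw [this, real_inner_self_eq_norm_mul_norm]
    have h5 : t * ‖d‖ = ‖y‖ := by rw [ht]; field_simp
    nlinarith
  have hznorm : ‖z‖ ≤ 2 * ‖y‖ := by
    calc ‖z‖ ≤ ‖y‖ + ‖t • d‖ := norm_add_le _ _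
    _ = 2 * ‖y‖ := by rw [htd]; ring
  have hzsq : ‖z‖ ^ 2 ≤ 4 * ‖y‖ ^ 2 := by nlinarith [norm_nonneg z]
  have hmain : ‖y‖ * ‖d‖ ≤ 10 * C * ‖y‖ ^ 2 := by
    rw [hnz] at h1
    rw [hinner] at h3
    rw [hinner2] at h1
    nlinarith
  have : ‖g y - g 0‖ = ‖d‖ := by rw [hd, norm_sub_rev]
  rw [this]
  calc ‖d‖ = (‖y‖ * ‖d‖) / ‖y‖ := by field_simp
  _ ≤ (10 * C * ‖y‖ ^ 2) / ‖y‖ := by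
      exact div_le_div_of_nonneg_right hmain hypos.le
  _ = 10 * C * ‖y‖ := by field_simp
end
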